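/- arXiv:1603.05732 — 2 statements merged into one kernel-verified Lean document; each statement's English description precedes it below -/
import Mathlib

section
/- There exist a constant c > 0 and for each n ∈ ℕ a function f ∈ L^1[0,1] with ‖f‖ = 1, all nonzero Haar coefficients of absolute value at least δ = 2^{-2n}, and a subset A of its Haar support such that A_ε(f) = A for every 0 < ε < 1 and ‖P_A(f)‖_{L^1} ≥ c·n ≥ c'·log(1/δ). In particular, the logarithmic dependence on δ in the near-unconditionality bound for the Haar basis of L^1 cannot be removed. -/
open MeasureTheory Set
open scoped Classical

noncomputable section

/-- The dyadic interval `[k/2^n, (k+1)/2^n)`. -/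
def dyadic (n k : ℕ) : Set ℝ := Set.Ico ((k : ℝ) / 2 ^ n) (((k : ℝ) + 1) / 2 ^ n)

/-- Left half `I⁺` of a dyadic interval. -/
def dplus (n k : ℕ) : Set ℝ := dyadic (n + 1) (2 * k)

/-- Right half `I⁻` of a dyadic interval. -/
def dminus (n k : ℕ) : Set ℝ := dyadic (n + 1) (2 * k + 1)

/-- Haar coefficient `c_I(f)` with respect to the L¹-normalized Haar system. -/
def haarC (f : ℝ → ℝ) (n k : ℕ) : ℝ :=
  (∫ x in dplus n k, f x) - ∫ x in dminus n k, f x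

/-- The L¹-normalized Haar function `h_I`. -/
def haarF (n k : ℕ) : ℝ → ℝ := fun x =>
  if x ∈ dplus n k then (2 : ℝ) ^ n else if x ∈ dminus n k then -(2 : ℝ) ^ n else 0

/-- Index set for the Haar system: the dyadic intervals of `[0,1]` together with `[0,2]`. -/
inductive HIdx where
  | root : HIdx
  | node : ℕ → ℕ → HIdx
  deriving DecidableEq

/-- Validity of an index: `node n k` encodes `[k/2^n, (k+1)/2^n) ⊆ [0,1)`. -/
def HIdx.valid : HIdx → Prop
  | .root => True
  | .node n k => k < 2 ^ n

/-- The interval encoded by an index. -/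
def HIdx.iset : HIdx → Set ℝ
  | .root => Set.Ico (0 : ℝ) 2
  | .node n k => dyadic n k

/-- Haar coefficient, where `c_{[0,2]}(f) = ∫_{[0,1)} f` (for `f` supported in `[0,1)`). -/
def hcoef (f : ℝ → ℝ) : HIdx → ℝ
  | .root => ∫ x in Set.Ico (0 : ℝ) 1, f x
  | .node n k => haarC f n k

/-- The `ε`-branch enlargement `A_ε(f)` of a set `A` of Haar indices. -/
def henlarge (f : ℝ → ℝ) (A : Set HIdx) (ε : ℝ) : Set HIdx :=
  {J | J.valid ∧ ∃ I ∈ A, I.iset ⊆ J.iset ∧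
    ∀ K : HIdx, K.valid → I.iset ⊆ K.iset → K.iset ⊆ J.iset →
      |hcoef f K - hcoef f I| < ε * |hcoef f I|}

namespace Dy


lemma two_pow_pos (a : ℕ) : (0:ℝ) < 2 ^ a := by positivity

lemma measurableSet_dyadic (a p : ℕ) : MeasurableSet (dyadic a p) := measurableSet_Ico

lemma volume_dyadic (a p : ℕ) : volume (dyadic a p) = ENNReal.ofReal (((2:ℝ)^a)⁻¹) := by
  rw [dyadic, Real.volume_Ico]
  congr 1
  field_simp
  ring

lemma dyadic_subset_unit {a p : ℕ} (hp : p < 2^a) : dyadic a p ⊆ Set.Ico (0:ℝ) 1 := by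
  intro x hx
  obtain ⟨h1, h2⟩ := hx
  constructor
  · exact le_trans (by positivity) h1
  · refine lt_of_lt_of_le h2 ?_
    rw [div_le_one (two_pow_pos a)]
    have : ((p+1 : ℕ):ℝ) ≤ ((2^a : ℕ):ℝ) := by exact_mod_cast hp
    push_cast at this; linarith

lemma pow_split {a b : ℕ} (hab : a ≤ b) : (2:ℝ)^b = 2^a * 2^(b-a) := by
  rw [← pow_add]; congr 1; omega

lemma dyadic_subset_div {a b : ℕ} (hab : a ≤ b) (q : ℕ) :
    dyadic b q ⊆ dyadic a (q / 2^(b-a)) := by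
  set E := 2^(b-a) with hE
  have hEpos : 0 < E := Nat.pow_pos (by norm_num)
  have hmod := Nat.div_add_mod q E
  have hlt := Nat.mod_lt q hEpos
  have h1 : (q / E) * E ≤ q := Nat.div_mul_le_self q E
  have h2 : q + 1 ≤ (q / E + 1) * E := by nlinarith [hmod, hlt]
  have hEc : ((E:ℕ):ℝ) = 2^(b-a) := by rw [hE]; push_cast; ring
  intro x hx
  obtain ⟨hx1, hx2⟩ := hx
  constructor
  · refine le_trans ?_ hx1
    rw [div_le_div_iff₀ (two_pow_pos a) (two_pow_pos b), pow_split hab]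
    have : ((q / E * E : ℕ):ℝ) ≤ (q:ℝ) := by exact_mod_cast h1
    push_cast [hEc] at this ⊢
    nlinarith [this, two_pow_pos a]
  · refine lt_of_lt_of_le hx2 ?_
    rw [div_le_div_iff₀ (two_pow_pos b) (two_pow_pos a), pow_split hab]
    have : ((q + 1 : ℕ):ℝ) ≤ (((q / E + 1) * E : ℕ):ℝ) := by exact_mod_cast h2
    push_cast [hEc] at this ⊢
    nlinarith [this, two_pow_pos a]

lemma dyadic_nonempty (a p : ℕ) : (dyadic a p).Nonempty := by
  refine ⟨(p:ℝ)/2^a, le_refl _, ?_⟩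
  have := two_pow_pos a
  rw [div_lt_div_iff₀ this this]
  nlinarith

lemma dyadic_disjoint {a p p' : ℕ} (h : p ≠ p') : Disjoint (dyadic a p) (dyadic a p') := by
  rw [Set.disjoint_iff]
  rintro x ⟨⟨h1, h2⟩, ⟨h3, h4⟩⟩
  rcases Nat.lt_or_ge p p' with hlt | hge
  · have hcast : ((p+1:ℕ):ℝ) ≤ (p':ℝ) := by exact_mod_cast hlt
    push_cast at hcast
    have hc : ((p:ℝ) + 1) / 2^a ≤ (p':ℝ) / 2^a := by
      rw [div_le_div_iff₀ (two_pow_pos a) (two_pow_pos a)]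
      nlinarith [two_pow_pos a]
    linarith
  · have hlt' : p' < p := by omega
    have hcast : ((p'+1:ℕ):ℝ) ≤ (p:ℝ) := by exact_mod_cast hlt'
    push_cast at hcast
    have hc : ((p':ℝ) + 1) / 2^a ≤ (p:ℝ) / 2^a := by
      rw [div_le_div_iff₀ (two_pow_pos a) (two_pow_pos a)]
      nlinarith [two_pow_pos a]
    linarith

lemma dyadic_subset_elim {a b p q : ℕ} (hsub : dyadic b q ⊆ dyadic a p) :
    a ≤ b ∧ q / 2^(b-a) = p := by
  have hvol := measure_mono (μ := volume) hsub
  rw [volume_dyadic, volume_dyadic, ENNReal.ofReal_le_ofReal_iff (by positivity)] at hvol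
  have h2ab : (2:ℝ)^a ≤ 2^b := by
    have ha := two_pow_pos a
    have hb := two_pow_pos b
    rw [inv_le_inv₀ hb ha] at hvol
    linarith
  have hab : a ≤ b := by
    by_contra hc
    push_neg at hc
    have : (2:ℝ)^b < 2^a := by
      apply pow_lt_pow_right₀ (by norm_num) hc
    linarith
  refine ⟨hab, ?_⟩
  by_contra hne
  have h2 := dyadic_subset_div hab q
  have hd := Set.disjoint_iff.mp (dyadic_disjoint (a := a) hne)
  obtain ⟨x, hx⟩ := dyadic_nonempty b q
  exact hd ⟨h2 hx, hsub hx⟩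


-- ## Step functions
def Fstep (N : ℕ) (c : ℕ → ℝ) : ℝ → ℝ := fun x =>
  ∑ j ∈ Finset.range (2^N), (dyadic N j).indicator (fun _ => c j) x

lemma indicator_integrable (b q : ℕ) (c : ℝ) :
    Integrable ((dyadic b q).indicator (fun _ => c)) := by
  rw [integrable_indicator_iff (measurableSet_dyadic b q)]
  apply integrableOn_const _ enorm_ne_top
  rw [volume_dyadic]
  exact ENNReal.ofReal_ne_top

lemma Fstep_integrable (N : ℕ) (c : ℕ → ℝ) : Integrable (Fstep N c) := by
  apply integrable_finset_sum
  intro j _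
  exact indicator_integrable N j (c j)

lemma Fstep_outside (N : ℕ) (c : ℕ → ℝ) {x : ℝ} (hx : x ∉ Set.Ico (0:ℝ) 1) :
    Fstep N c x = 0 := by
  apply Finset.sum_eq_zero
  intro j hj
  apply Set.indicator_of_notMem
  intro hm
  exact hx (dyadic_subset_unit (Finset.mem_range.mp hj) hm)

lemma setIntegral_indicator_dyadic_coarse {a b : ℕ} (hab : a ≤ b) (p q : ℕ) (c : ℝ) :
    ∫ x in dyadic a p, (dyadic b q).indicator (fun _ => c) x
      = if q / 2^(b-a) = p then c * ((2:ℝ)^b)⁻¹ else 0 := by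
  rw [setIntegral_indicator (measurableSet_dyadic b q)]
  by_cases h : q / 2^(b-a) = p
  · rw [if_pos h]
    have hsub : dyadic b q ⊆ dyadic a p := h ▸ dyadic_subset_div hab q
    rw [Set.inter_eq_self_of_subset_right hsub, setIntegral_const, measureReal_def, volume_dyadic,
      ENNReal.toReal_ofReal (by positivity), smul_eq_mul, mul_comm]
  · rw [if_neg h]
    have hdisj : dyadic a p ∩ dyadic b q = ∅ := by
      apply Set.eq_empty_of_subset_empty
      intro x hx
      have h1 := dyadic_subset_div hab q hx.2
      exact Set.disjoint_iff.mp (dyadic_disjoint h) ⟨h1, hx.1⟩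
    rw [hdisj, Measure.restrict_empty, integral_zero_measure]

lemma setIntegral_indicator_dyadic_fine {a b : ℕ} (hba : b ≤ a) (p q : ℕ) (c : ℝ) :
    ∫ x in dyadic a p, (dyadic b q).indicator (fun _ => c) x
      = if p / 2^(a-b) = q then c * ((2:ℝ)^a)⁻¹ else 0 := by
  rw [setIntegral_indicator (measurableSet_dyadic b q)]
  by_cases h : p / 2^(a-b) = q
  · rw [if_pos h]
    have hsub : dyadic a p ⊆ dyadic b q := h ▸ dyadic_subset_div hba p
    rw [Set.inter_eq_self_of_subset_left hsub, setIntegral_const, measureReal_def, volume_dyadic,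
      ENNReal.toReal_ofReal (by positivity), smul_eq_mul, mul_comm]
  · rw [if_neg h]
    have hdisj : dyadic a p ∩ dyadic b q = ∅ := by
      apply Set.eq_empty_of_subset_empty
      intro x hx
      have h1 := dyadic_subset_div hba p hx.1
      exact Set.disjoint_iff.mp (dyadic_disjoint h) ⟨h1, hx.2⟩
    rw [hdisj, Measure.restrict_empty, integral_zero_measure]

lemma setIntegral_Fstep_coarse {N L : ℕ} (hL : L ≤ N) (p : ℕ) (c : ℕ → ℝ) :
    ∫ x in dyadic L p, Fstep N c x
      = (∑ j ∈ (Finset.range (2^N)).filter (fun j => j / 2^(N-L) = p), c j) / 2^N := by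
  simp only [Fstep]
  rw [integral_finset_sum]
  swap
  · intro j _
    exact (indicator_integrable N j (c j)).integrableOn
  have : ∀ j ∈ Finset.range (2^N),
      (∫ x in dyadic L p, (dyadic N j).indicator (fun _ => c j) x)
        = if j / 2^(N-L) = p then c j * ((2:ℝ)^N)⁻¹ else 0 := by
    intro j _
    exact setIntegral_indicator_dyadic_coarse hL p j (c j)
  rw [Finset.sum_congr rfl this, Finset.sum_ite, Finset.sum_const_zero, add_zero,
    ← Finset.sum_mul, div_eq_mul_inv]

lemma setIntegral_Fstep_fine {N L : ℕ} (hL : N ≤ L) {p : ℕ} (hp : p < 2^L) (c : ℕ → ℝ) :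
    ∫ x in dyadic L p, Fstep N c x = c (p / 2^(L-N)) / 2^L := by
  simp only [Fstep]
  rw [integral_finset_sum]
  swap
  · intro j _
    exact (indicator_integrable N j (c j)).integrableOn
  have hq : p / 2^(L-N) < 2^N := by
    apply Nat.div_lt_of_lt_mul
    have he : (2:ℕ)^(L-N) * 2^N = 2^L := by rw [← pow_add]; congr 1; omega
    omega
  have : ∀ j ∈ Finset.range (2^N),
      (∫ x in dyadic L p, (dyadic N j).indicator (fun _ => c j) x)
        = if p / 2^(L-N) = j then c j * ((2:ℝ)^L)⁻¹ else 0 := by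
    intro j _
    exact setIntegral_indicator_dyadic_fine hL p j (c j)
  rw [Finset.sum_congr rfl this, Finset.sum_ite_eq (Finset.range (2^N)) _ (fun j => c j * ((2:ℝ)^L)⁻¹),
    if_pos (Finset.mem_range.mpr hq), div_eq_mul_inv]

lemma integral_Fstep (N : ℕ) (c : ℕ → ℝ) :
    ∫ x, Fstep N c x = (∑ j ∈ Finset.range (2^N), c j) / 2^N := by
  simp only [Fstep]
  rw [integral_finset_sum]
  swap
  · intro j _; exact indicator_integrable N j (c j)
  have : ∀ j ∈ Finset.range (2^N),
      (∫ x, (dyadic N j).indicator (fun _ => c j) x) = c j * ((2:ℝ)^N)⁻¹ := by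
    intro j _
    rw [integral_indicator (measurableSet_dyadic N j), setIntegral_const, measureReal_def, volume_dyadic,
      ENNReal.toReal_ofReal (by positivity), smul_eq_mul, mul_comm]
  rw [Finset.sum_congr rfl this, ← Finset.sum_mul, div_eq_mul_inv]

lemma mem_dyadic_unique {N j j' : ℕ} {x : ℝ} (h1 : x ∈ dyadic N j) (h2 : x ∈ dyadic N j') :
    j = j' := by
  by_contra h
  exact Set.disjoint_iff.mp (dyadic_disjoint h) ⟨h1, h2⟩

lemma abs_Fstep (N : ℕ) (c : ℕ → ℝ) (x : ℝ) :
    |Fstep N c x| = Fstep N (fun j => |c j|) x := by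
  by_cases hx : ∃ j ∈ Finset.range (2^N), x ∈ dyadic N j
  · obtain ⟨j₀, hj₀, hxj₀⟩ := hx
    have e1 : Fstep N c x = c j₀ := by
      simp only [Fstep]
      rw [Finset.sum_eq_single_of_mem j₀ hj₀]
      · exact Set.indicator_of_mem hxj₀ _
      · intro j _ hne
        exact Set.indicator_of_notMem (fun hm => hne (mem_dyadic_unique hm hxj₀)) _
    have e2 : Fstep N (fun j => |c j|) x = |c j₀| := by
      simp only [Fstep]
      rw [Finset.sum_eq_single_of_mem j₀ hj₀]
      · exact Set.indicator_of_mem hxj₀ _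
      · intro j _ hne
        exact Set.indicator_of_notMem (fun hm => hne (mem_dyadic_unique hm hxj₀)) _
    rw [e1, e2]
  · push_neg at hx
    have e1 : Fstep N c x = 0 := Finset.sum_eq_zero fun j hj =>
      Set.indicator_of_notMem (hx j hj) _
    have e2 : Fstep N (fun j => |c j|) x = 0 := Finset.sum_eq_zero fun j hj =>
      Set.indicator_of_notMem (hx j hj) _
    rw [e1, e2, abs_zero]

lemma integral_abs_Fstep (N : ℕ) (c : ℕ → ℝ) :
    ∫ x, |Fstep N c x| = (∑ j ∈ Finset.range (2^N), |c j|) / 2^N := by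
  have : (fun x => |Fstep N c x|) = Fstep N (fun j => |c j|) := funext (abs_Fstep N c)
  rw [this, integral_Fstep]


-- ## Haar coefficients of step functions
lemma unit_eq_dyadic : Set.Ico (0:ℝ) 1 = dyadic 0 0 := by
  simp [dyadic]

lemma hcoef_Fstep_root (N : ℕ) (c : ℕ → ℝ) :
    hcoef (Fstep N c) .root = (∑ j ∈ Finset.range (2^N), c j) / 2^N := by
  show (∫ x in Set.Ico (0:ℝ) 1, Fstep N c x) = _
  rw [unit_eq_dyadic, setIntegral_Fstep_coarse (Nat.zero_le N) 0 c]
  congr 1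
  apply Finset.sum_congr _ (fun _ _ => rfl)
  apply Finset.filter_true_of_mem
  intro j hj
  rw [Finset.mem_range] at hj
  apply Nat.div_eq_of_lt
  simpa using hj

lemma hcoef_Fstep_node_ge {N ℓ : ℕ} (hL : N ≤ ℓ) {i : ℕ} (hi : i < 2^ℓ) (c : ℕ → ℝ) :
    hcoef (Fstep N c) (.node ℓ i) = 0 := by
  show haarC (Fstep N c) ℓ i = 0
  rw [haarC, dplus, dminus]
  have h1 : 2*i < 2^(ℓ+1) := by
    have : (2:ℕ)^(ℓ+1) = 2*2^ℓ := by ring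
    omega
  have h2 : 2*i+1 < 2^(ℓ+1) := by
    have : (2:ℕ)^(ℓ+1) = 2*2^ℓ := by ring
    omega
  rw [setIntegral_Fstep_fine (by omega) h1 c, setIntegral_Fstep_fine (by omega) h2 c]
  have he : ℓ + 1 - N = (ℓ - N) + 1 := by omega
  have hdiv : (2*i) / 2^(ℓ+1-N) = (2*i+1) / 2^(ℓ+1-N) := by
    rw [he, pow_succ']
    rw [Nat.mul_div_mul_left _ _ (by norm_num)]
    rw [← Nat.div_div_eq_div_mul]
    congr 1
    omega
  rw [hdiv, sub_self]

lemma hcoef_Fstep_node_lt {N ℓ : ℕ} (hL : ℓ < N) (i : ℕ) (c : ℕ → ℝ) :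
    hcoef (Fstep N c) (.node ℓ i)
      = (∑ j ∈ (Finset.range (2^N)).filter (fun j => j / 2^(N-ℓ) = i),
          (if j.testBit (N-ℓ-1) then -(c j) else c j)) / 2^N := by
  show haarC (Fstep N c) ℓ i = _
  rw [haarC, dplus, dminus,
    setIntegral_Fstep_coarse (by omega : ℓ+1 ≤ N) (2*i) c,
    setIntegral_Fstep_coarse (by omega : ℓ+1 ≤ N) (2*i+1) c]
  set w := N - ℓ - 1 with hw
  have hw1 : N - (ℓ+1) = w := by omega
  have hw2 : N - ℓ = w + 1 := by omega
  rw [hw1, hw2]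
  have key : ∀ j : ℕ, (j / 2^w = 2*i ↔ j / 2^(w+1) = i ∧ j.testBit w = false)
      ∧ (j / 2^w = 2*i+1 ↔ j / 2^(w+1) = i ∧ j.testBit w = true) := by
    intro j
    have hq : j / 2^(w+1) = j / 2^w / 2 := by rw [pow_succ, ← Nat.div_div_eq_div_mul]
    simp only [Nat.testBit_eq_decide_div_mod_eq, decide_eq_true_eq, decide_eq_false_iff_not, hq]
    generalize j / 2^w = q
    omega
  rw [div_sub_div_same]
  congr 1
  have hsplit := Finset.sum_filter_add_sum_filter_not
    ((Finset.range (2^N)).filter (fun j => j / 2^(w+1) = i)) (fun j => j.testBit w = true)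
    (fun j => if j.testBit w then -(c j) else c j)
  have eB : ((Finset.range (2^N)).filter (fun j => j / 2^(w+1) = i)).filter
        (fun j => j.testBit w = true)
      = (Finset.range (2^N)).filter (fun j => j / 2^w = 2*i+1) := by
    ext j
    simp only [Finset.mem_filter, Finset.mem_range, and_assoc]
    constructor
    · rintro ⟨h1, h2, h3⟩
      exact ⟨h1, ((key j).2).mpr ⟨h2, h3⟩⟩
    · rintro ⟨h1, h2⟩
      obtain ⟨h3, h4⟩ := ((key j).2).mp h2
      exact ⟨h1, h3, h4⟩
  have eA : ((Finset.range (2^N)).filter (fun j => j / 2^(w+1) = i)).filter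
        (fun j => ¬ (j.testBit w = true))
      = (Finset.range (2^N)).filter (fun j => j / 2^w = 2*i) := by
    ext j
    simp only [Finset.mem_filter, Finset.mem_range, and_assoc, Bool.not_eq_true]
    constructor
    · rintro ⟨h1, h2, h3⟩
      exact ⟨h1, ((key j).1).mpr ⟨h2, h3⟩⟩
    · rintro ⟨h1, h2⟩
      obtain ⟨h3, h4⟩ := ((key j).1).mp h2
      exact ⟨h1, h3, h4⟩
  rw [eB, eA] at hsplit
  have vB : ∑ j ∈ (Finset.range (2^N)).filter (fun j => j / 2^w = 2*i+1),
      (if j.testBit w then -(c j) else c j)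
      = -∑ j ∈ (Finset.range (2^N)).filter (fun j => j / 2^w = 2*i+1), c j := by
    rw [← Finset.sum_neg_distrib]
    apply Finset.sum_congr rfl
    intro j hj
    rw [Finset.mem_filter] at hj
    have := ((key j).2).mp hj.2
    rw [if_pos this.2]
  have vA : ∑ j ∈ (Finset.range (2^N)).filter (fun j => j / 2^w = 2*i),
      (if j.testBit w then -(c j) else c j)
      = ∑ j ∈ (Finset.range (2^N)).filter (fun j => j / 2^w = 2*i), c j := by
    apply Finset.sum_congr rfl
    intro j hj
    rw [Finset.mem_filter] at hj
    have := ((key j).1).mp hj.2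
    rw [this.2]
    simp
  rw [vB, vA] at hsplit
  linarith [hsplit]


def EF (j : ℕ) : Prop := ∀ p, p % 2 = 0 → j.testBit p = false
def Codd (i : ℕ) : Prop := ∀ t, t % 2 = 1 → i.testBit t = false

lemma tb_div (K j t : ℕ) : (j / 2^K).testBit t = j.testBit (K + t) := by
  rw [← Nat.shiftRight_eq_div_pow, Nat.testBit_shiftRight]

lemma tb_mod {K p : ℕ} (j : ℕ) (h : p < K) : (j % 2^K).testBit p = j.testBit p := by
  rw [Nat.testBit_mod_two_pow, decide_eq_true (by omega : p < K), Bool.true_and]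

lemma tb_of_div {K i t : ℕ} (j : ℕ) (h : j / 2^K = i) : j.testBit (K + t) = i.testBit t := by
  rw [← tb_div, h]

lemma xor_bit_self (j u : ℕ) : (j ^^^ 2^u).testBit u = !j.testBit u := by
  rw [Nat.testBit_xor, Nat.testBit_two_pow_self, Bool.xor_true]

lemma xor_bit_other {v u : ℕ} (j : ℕ) (h : v ≠ u) : (j ^^^ 2^u).testBit v = j.testBit v := by
  rw [Nat.testBit_xor, Nat.testBit_two_pow_of_ne (fun he => h he.symm), Bool.xor_false]

lemma xor_lt {j N u : ℕ} (hj : j < 2^N) (hu : u < N) : j ^^^ 2^u < 2^N := by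
  apply Nat.lt_pow_two_of_testBit
  intro t ht
  rw [xor_bit_other j (by omega)]
  exact Nat.testBit_lt_two_pow (lt_of_lt_of_le hj (Nat.pow_le_pow_right (by norm_num) ht))

lemma xor_div {u K : ℕ} (j : ℕ) (hu : u < K) : (j ^^^ 2^u) / 2^K = j / 2^K := by
  apply Nat.eq_of_testBit_eq
  intro t
  rw [tb_div, tb_div]
  exact xor_bit_other j (by omega)

lemma xor_ne (j u : ℕ) : j ^^^ 2^u ≠ j := by
  intro h
  have := congrArg (fun m => m.testBit u) h
  simp only [xor_bit_self] at this
  exact Bool.not_ne_self _ this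

lemma xor_xor_cancel (j u : ℕ) : (j ^^^ 2^u) ^^^ 2^u = j := Nat.xor_xor_cancel_right _ _

/-- Key involution principle: a signed sum over a dyadic block vanishes if flipping
bit `u` negates the summand. -/
lemma sum_flip {N K u i : ℕ} (hu : u < N) (huK : u < K) (F : ℕ → ℝ)
    (hF : ∀ j, j < 2^N → F (j ^^^ 2^u) = - F j) :
    ∑ j ∈ (Finset.range (2^N)).filter (fun j => j / 2^K = i), F j = 0 := by
  apply Finset.sum_involution (fun j _ => j ^^^ 2^u)
  · intro j hj
    rw [Finset.mem_filter, Finset.mem_range] at hj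
    rw [hF j hj.1]; ring
  · intro j _ _
    exact xor_ne j u
  · intro j _
    exact xor_xor_cancel j u
  · intro j hj
    rw [Finset.mem_filter, Finset.mem_range] at hj ⊢
    exact ⟨xor_lt hj.1 hu, by rw [xor_div j huK]; exact hj.2⟩

lemma card_block {N K i : ℕ} (hK : K ≤ N) (hi : i < 2^(N-K)) :
    ((Finset.range (2^N)).filter (fun j => j / 2^K = i)).card = 2^K := by
  have he : ((Finset.range (2^N)).filter (fun j => j / 2^K = i))
      = Finset.image (fun r => i * 2^K + r) (Finset.range (2^K)) := by
    ext j
    simp only [Finset.mem_filter, Finset.mem_range, Finset.mem_image]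
    constructor
    · rintro ⟨h1, h2⟩
      refine ⟨j % 2^K, Nat.mod_lt j (by positivity), ?_⟩
      subst h2
      rw [mul_comm]
      exact Nat.div_add_mod j (2^K)
    · rintro ⟨r, hr, rfl⟩
      have hd : (i * 2^K + r) / 2^K = i := by
        rw [Nat.add_comm, Nat.add_mul_div_right _ _ (by positivity : 0 < 2^K),
          Nat.div_eq_of_lt hr, Nat.zero_add]
      refine ⟨?_, hd⟩
      have h1 : (i+1) * 2^K ≤ 2^(N-K) * 2^K := Nat.mul_le_mul_right _ (by omega)
      have h2 : (2:ℕ)^(N-K) * 2^K = 2^N := by rw [← pow_add]; congr 1; omega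
      nlinarith
  rw [he, Finset.card_image_of_injective _ (fun a b h => by omega), Finset.card_range]

lemma tb_div4 (x p : ℕ) : (x/4).testBit p = x.testBit (2+p) := by
  have e4 : (4:ℕ) = 2^2 := by norm_num
  rw [e4, tb_div]

lemma EF_iff (x : ℕ) : EF x ↔ (x % 2 = 0 ∧ EF (x / 4)) := by
  constructor
  · intro h
    refine ⟨?_, ?_⟩
    · have := h 0 rfl
      rw [Nat.testBit_zero] at this
      simp at this
      omega
    · intro p hp
      rw [tb_div4]
      exact h (2+p) (by omega)
  · rintro ⟨h0, h4⟩ p hp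
    rcases Nat.eq_zero_or_pos p with rfl | hpos
    · rw [Nat.testBit_zero]
      simp
      omega
    · have hp2 : p = 2 + (p - 2) := by omega
      rw [hp2, ← tb_div4]
      exact h4 (p-2) (by omega)

lemma card_EF : ∀ M : ℕ, ((Finset.range (2^M)).filter EF).card = 2^(M/2) := by
  intro M
  induction M using Nat.strong_induction_on with
  | _ M ih =>
  match M with
  | 0 =>
    have h0 : EF 0 := fun p _ => Nat.zero_testBit p
    rw [pow_zero, Finset.range_one, Finset.filter_singleton, if_pos h0, Finset.card_singleton]
  | 1 =>
    have h0 : EF 0 := fun p _ => Nat.zero_testBit p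
    have h1 : ¬ EF 1 := by
      intro h
      have := h 0 rfl
      rw [Nat.testBit_zero] at this
      simp at this
    have e2 : (2:ℕ)^1 = 2 := rfl
    rw [e2]
    have hset : (Finset.range 2).filter EF = {0} := by
      ext x
      simp only [Finset.mem_filter, Finset.mem_range, Finset.mem_singleton]
      constructor
      · rintro ⟨hx, hEF⟩
        interval_cases x
        · rfl
        · exact absurd hEF h1
      · rintro rfl
        exact ⟨by norm_num, h0⟩
    rw [hset, Finset.card_singleton]
    norm_num
  | (M+2) =>
    have hpow : (2:ℕ)^(M+2) = 4 * 2^M := by ring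
    have key : (Finset.range (2^(M+2))).filter EF
        = (Finset.image (fun r => 4*r) ((Finset.range (2^M)).filter EF))
          ∪ (Finset.image (fun r => 4*r+2) ((Finset.range (2^M)).filter EF)) := by
      ext x
      simp only [Finset.mem_filter, Finset.mem_range, Finset.mem_union, Finset.mem_image]
      constructor
      · rintro ⟨h1, h2⟩
        have h3 := (EF_iff x).mp h2
        have hx4 : x / 4 < 2^M := by omega
        have hmod : x % 4 = 0 ∨ x % 4 = 2 := by omega
        rcases hmod with hm | hm
        · left; exact ⟨x/4, ⟨hx4, h3.2⟩, by omega⟩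
        · right; exact ⟨x/4, ⟨hx4, h3.2⟩, by omega⟩
      · rintro (⟨r, ⟨hr, hEF⟩, rfl⟩ | ⟨r, ⟨hr, hEF⟩, rfl⟩)
        · refine ⟨by omega, (EF_iff _).mpr ⟨by omega, by rwa [Nat.mul_div_cancel_left r (by norm_num)]⟩⟩
        · refine ⟨by omega, (EF_iff _).mpr ⟨by omega, ?_⟩⟩
          have : (4*r+2)/4 = r := by omega
          rwa [this]
    rw [key, Finset.card_union_of_disjoint, Finset.card_image_of_injective _ (fun a b h => by omega),
      Finset.card_image_of_injective _ (fun a b h => by omega), ih M (by omega)]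
    · have : (M+2)/2 = M/2 + 1 := by omega
      rw [this, pow_succ]
      ring
    · rw [Finset.disjoint_left]
      rintro x hx hy
      simp only [Finset.mem_image] at hx hy
      obtain ⟨r, _, rfl⟩ := hx
      obtain ⟨r', _, he⟩ := hy
      omega

lemma block_EF_empty {N K i t : ℕ} (ht : i.testBit t = true) (hpar : (K + t) % 2 = 0) :
    ((Finset.range (2^N)).filter (fun j => j / 2^K = i ∧ EF j)) = ∅ := by
  apply Finset.eq_empty_of_forall_notMem
  intro j hj
  rw [Finset.mem_filter] at hj
  obtain ⟨_, hdiv, hEF⟩ := hj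
  have h1 := tb_of_div (t := t) j hdiv
  rw [hEF (K+t) hpar] at h1
  rw [ht] at h1
  exact Bool.false_ne_true h1

lemma card_EF_block {N w i : ℕ} (hw : w < N) (hwe : w % 2 = 0) (hi : i < 2^(N-(w+1)))
    (hcodd : Codd i) :
    ((Finset.range (2^N)).filter (fun j => j / 2^(w+1) = i ∧ EF j)).card = 2^(w/2) := by
  have hKpos : (0:ℕ) < 2^(w+1) := by positivity
  have hcard : ((Finset.range (2^(w+1))).filter EF).card = 2^(w/2) := by
    rw [card_EF (w+1)]
    congr 1
    omega
  rw [← hcard]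
  apply Finset.card_nbij' (fun j => j % 2^(w+1)) (fun r => i * 2^(w+1) + r)
  · intro j hj
    rw [Finset.mem_coe, Finset.mem_filter, Finset.mem_range] at hj
    rw [Finset.mem_coe, Finset.mem_filter, Finset.mem_range]
    obtain ⟨hjN, hdiv, hEF⟩ := hj
    refine ⟨Nat.mod_lt j hKpos, ?_⟩
    intro p hp
    rcases lt_or_ge p (w+1) with hlt | hge
    · rw [tb_mod j hlt]
      exact hEF p hp
    · rw [Nat.testBit_mod_two_pow]
      simp [Nat.not_lt.mpr hge]
  · intro r hr
    rw [Finset.mem_coe, Finset.mem_filter, Finset.mem_range] at hr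
    rw [Finset.mem_coe, Finset.mem_filter, Finset.mem_range]
    obtain ⟨hrK, hEFr⟩ := hr
    have hmodeq : (i * 2^(w+1) + r) % 2^(w+1) = r := by
      rw [mul_comm, Nat.mul_add_mod, Nat.mod_eq_of_lt hrK]
    have hdiv : (i * 2^(w+1) + r) / 2^(w+1) = i := by
      rw [Nat.add_comm, Nat.add_mul_div_right _ _ hKpos, Nat.div_eq_of_lt hrK, Nat.zero_add]
    have hlt2 : i * 2^(w+1) + r < 2^N := by
      have h1 : (i+1) * 2^(w+1) ≤ 2^(N-(w+1)) * 2^(w+1) := Nat.mul_le_mul_right _ (by omega)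
      have h2 : (2:ℕ)^(N-(w+1)) * 2^(w+1) = 2^N := by rw [← pow_add]; congr 1; omega
      nlinarith
    refine ⟨hlt2, hdiv, ?_⟩
    intro p hp
    rcases lt_or_ge p (w+1) with hlt | hge
    · rw [← tb_mod _ hlt, hmodeq]
      exact hEFr p hp
    · have hpt : p = (w+1) + (p - (w+1)) := by omega
      rw [hpt, tb_of_div _ hdiv]
      exact hcodd _ (by omega)
  · intro j hj
    rw [Finset.mem_coe, Finset.mem_filter] at hj
    obtain ⟨_, hdiv, _⟩ := hj
    dsimp only
    rw [← hdiv, mul_comm]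
    exact Nat.div_add_mod j (2^(w+1))
  · intro r hr
    rw [Finset.mem_coe, Finset.mem_filter, Finset.mem_range] at hr
    dsimp only
    rw [mul_comm, Nat.mul_add_mod, Nat.mod_eq_of_lt hr.1]

/-- weaker-threshold condition -/
def ec (v j : ℕ) : Prop := ∀ p, p % 2 = 0 → v ≤ p → j.testBit p = false

lemma ec_zero_iff_EF (j : ℕ) : ec 0 j ↔ EF j := by
  constructor
  · intro h p hp; exact h p hp (Nat.zero_le p)
  · intro h p hp _; exact h p hp

lemma ec_mono {v v' j : ℕ} (hvv : v ≤ v') (h : ec v j) : ec v' j :=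
  fun p hp hvp => h p hp (le_trans hvv hvp)

lemma card_ec {N v : ℕ} (hv : v % 2 = 0) (hvN : v ≤ N) :
    ((Finset.range (2^N)).filter (ec v)).card = 2^((N+v)/2) := by
  have hvpos : (0:ℕ) < 2^v := by positivity
  have hprod : ((Finset.range (2^v)) ×ˢ ((Finset.range (2^(N-v))).filter EF)).card
      = 2^((N+v)/2) := by
    rw [Finset.card_product, Finset.card_range, card_EF]
    rw [← pow_add]
    congr 1
    omega
  rw [← hprod]
  apply Finset.card_nbij' (fun j => (j % 2^v, j / 2^v)) (fun r => r.2 * 2^v + r.1)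
  · intro j hj
    rw [Finset.mem_coe, Finset.mem_filter, Finset.mem_range] at hj
    obtain ⟨hjN, hec⟩ := hj
    rw [Finset.mem_coe, Finset.mem_product, Finset.mem_range, Finset.mem_filter, Finset.mem_range]
    refine ⟨Nat.mod_lt j hvpos, ?_, ?_⟩
    · apply Nat.div_lt_of_lt_mul
      have h2 : (2:ℕ)^v * 2^(N-v) = 2^N := by rw [← pow_add]; congr 1; omega
      omega
    · intro p hp
      rw [tb_div]
      exact hec (v+p) (by omega) (by omega)
  · intro r hr
    rw [Finset.mem_coe, Finset.mem_product, Finset.mem_range, Finset.mem_filter, Finset.mem_range] at hr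
    obtain ⟨h1, h2, h3⟩ := hr
    rw [Finset.mem_coe, Finset.mem_filter, Finset.mem_range]
    have hdiv : (r.2 * 2^v + r.1) / 2^v = r.2 := by
      rw [Nat.add_comm, Nat.add_mul_div_right _ _ hvpos, Nat.div_eq_of_lt h1, Nat.zero_add]
    constructor
    · have ha : (r.2+1) * 2^v ≤ 2^(N-v) * 2^v := Nat.mul_le_mul_right _ (by omega)
      have hb : (2:ℕ)^(N-v) * 2^v = 2^N := by rw [← pow_add]; congr 1; omega
      nlinarith
    · intro p hp hvp
      have hpt : p = v + (p - v) := by omega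
      rw [hpt, tb_of_div _ hdiv]
      exact h3 (p - v) (by omega)
  · intro j hj
    dsimp only
    rw [mul_comm]
    exact Nat.div_add_mod j (2^v)
  · intro r hr
    rw [Finset.mem_coe, Finset.mem_product, Finset.mem_range] at hr
    have h1 := hr.1
    have e1 : (r.2 * 2^v + r.1) % 2^v = r.1 := by
      rw [mul_comm, Nat.mul_add_mod, Nat.mod_eq_of_lt h1]
    have e2 : (r.2 * 2^v + r.1) / 2^v = r.2 := by
      rw [Nat.add_comm, Nat.add_mul_div_right _ _ hvpos, Nat.div_eq_of_lt h1, Nat.zero_add]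
    dsimp only
    rw [e1, e2]


-- ## the coefficient vectors
def fvec (N : ℕ) : ℕ → ℝ := fun j => if EF j then (2:ℝ)^(N/2) else 0

def dvc (N m : ℕ) : ℕ → ℝ := fun j =>
  if ec (N - 2*m + 2) j then (if j.testBit (N - 2*m) then -(2:ℝ)^(m-1) else (2:ℝ)^(m-1)) else 0

def gvec (n : ℕ) : ℕ → ℝ := fun j => ∑ k ∈ Finset.Icc 1 n, dvc (4*n) (2*k) j

lemma sum_flip_range {N u : ℕ} (hu : u < N) (F : ℕ → ℝ)
    (hF : ∀ j, j < 2^N → F (j ^^^ 2^u) = - F j) :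
    ∑ j ∈ Finset.range (2^N), F j = 0 := by
  have : Finset.range (2^N) = (Finset.range (2^N)).filter (fun j => j / 2^N = 0) := by
    symm
    apply Finset.filter_true_of_mem
    intro j hj
    rw [Finset.mem_range] at hj
    exact Nat.div_eq_of_lt hj
  rw [this]
  exact sum_flip hu (by omega) F hF

-- dvc invariance / antiinvariance under bit flips
lemma ec_xor {v u j : ℕ} (hu : u < v) : ec v (j ^^^ 2^u) ↔ ec v j := by
  constructor <;> intro h p hp hvp
  · rw [← h p hp hvp, xor_bit_other j (by omega)]
  · rw [xor_bit_other j (by omega)]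
    exact h p hp hvp

lemma dvc_xor_small {N m u j : ℕ} (hu : u < N - 2*m) :
    dvc N m (j ^^^ 2^u) = dvc N m j := by
  unfold dvc
  rw [xor_bit_other j (by omega : N - 2*m ≠ u)]
  by_cases h : ec (N - 2*m + 2) j
  · rw [if_pos h, if_pos ((ec_xor (by omega)).mpr h)]
  · rw [if_neg h, if_neg (fun hc => h ((ec_xor (by omega)).mp hc))]

lemma dvc_xor_sign {N m j : ℕ} : dvc N m (j ^^^ 2^(N - 2*m)) = - dvc N m j := by
  unfold dvc
  rw [xor_bit_self]
  by_cases h : ec (N - 2*m + 2) j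
  · rw [if_pos h, if_pos ((ec_xor (by omega)).mpr h)]
    cases hb : j.testBit (N - 2*m) <;> simp [hb]
  · rw [if_neg h, if_neg (fun hc => h ((ec_xor (by omega)).mp hc)), neg_zero]

-- the signed piece sums
lemma piece_sum_ne {N m ℓ i : ℕ} (hm : 1 ≤ m) (hmN : 2*m ≤ N) (hℓ : ℓ < N)
    (hne : ℓ + 1 ≠ 2*m) :
    ∑ j ∈ (Finset.range (2^N)).filter (fun j => j / 2^(N-ℓ) = i),
      (if j.testBit (N-ℓ-1) then -(dvc N m j) else dvc N m j) = 0 := by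
  set w := N - ℓ - 1 with hw
  set v := N - 2*m with hv
  have hKw : N - ℓ = w + 1 := by omega
  have hwv : w ≠ v := by omega
  rw [hKw]
  rcases Nat.lt_or_ge w v with hlt | hge
  · -- flip bit w : sign flips, dvc invariant
    apply sum_flip (u := w) (by omega) (by omega)
    intro j _
    rw [dvc_xor_small hlt, xor_bit_self]
    cases hb : j.testBit w <;> simp [hb]
  · -- w > v : flip bit v : dvc flips, sign invariant
    have hvw : v < w := by omega
    apply sum_flip (u := v) (by omega) (by omega)
    intro j _
    rw [xor_bit_other j (by omega), dvc_xor_sign]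
    cases hb : j.testBit w <;> simp [hb]

lemma piece_sum_eq {N m ℓ i : ℕ} (hN : N % 2 = 0) (hm : 1 ≤ m) (hℓeq : ℓ + 1 = 2*m)
    (hℓ : ℓ < N) (hi : i < 2^ℓ) :
    ∑ j ∈ (Finset.range (2^N)).filter (fun j => j / 2^(N-ℓ) = i),
      (if j.testBit (N-ℓ-1) then -(dvc N m j) else dvc N m j)
    = if Codd i then (2:ℝ)^(m-1) * 2^(N-ℓ) else 0 := by
  set w := N - ℓ - 1 with hw
  have hKw : N - ℓ = w + 1 := by omega
  have hvw : N - 2*m = w := by omega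
  have hweven : w % 2 = 0 := by omega
  rw [hKw]
  have step : ∀ j ∈ (Finset.range (2^N)).filter (fun j => j / 2^(w+1) = i),
      (if j.testBit w then -(dvc N m j) else dvc N m j)
        = if Codd i then (2:ℝ)^(m-1) else 0 := by
    intro j hj
    rw [Finset.mem_filter, Finset.mem_range] at hj
    have heciff : ec (N - 2*m + 2) j ↔ Codd i := by
      rw [hvw]
      constructor
      · intro h t ht
        rw [← tb_of_div (t := t) j hj.2]
        exact h (w+1+t) (by omega) (by omega)
      · intro h p hp hvp
        have hpt : p = (w+1) + (p - (w+1)) := by omega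
        rw [hpt, tb_of_div j hj.2]
        exact h _ (by omega)
    unfold dvc
    by_cases hc : Codd i
    · rw [if_pos hc, if_pos (heciff.mpr hc)]
      cases hb : j.testBit (N - 2*m) <;> rw [hvw] at hb <;> simp [hb]
    · rw [if_neg hc, if_neg (fun hh => hc (heciff.mp hh))]
      cases hb : j.testBit w <;> simp [hb]
  rw [Finset.sum_congr rfl step, Finset.sum_const,
    card_block (by omega) (by rw [(by omega : N - (w+1) = ℓ)]; exact hi)]
  by_cases hc : Codd i
  · rw [if_pos hc, if_pos hc, nsmul_eq_mul, Nat.cast_pow, Nat.cast_ofNat, mul_comm]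
  · rw [if_neg hc, if_neg hc, smul_zero]

-- f-vector sums
lemma fvec_sum_root {N : ℕ} (hN : N % 2 = 0) :
    ∑ j ∈ Finset.range (2^N), fvec N j = (2:ℝ)^N := by
  unfold fvec
  rw [Finset.sum_ite, Finset.sum_const_zero, add_zero, Finset.sum_const, card_EF,
    nsmul_eq_mul, Nat.cast_pow, Nat.cast_ofNat, ← pow_add]
  congr 1
  omega

lemma fvec_sum_even {N ℓ i : ℕ} (hN : N % 2 = 0) (hℓ : ℓ < N) (hpar : ℓ % 2 = 0) :
    ∑ j ∈ (Finset.range (2^N)).filter (fun j => j / 2^(N-ℓ) = i),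
      (if j.testBit (N-ℓ-1) then -(fvec N j) else fvec N j) = 0 := by
  set w := N - ℓ - 1 with hw
  have hKw : N - ℓ = w + 1 := by omega
  have hwodd : w % 2 = 1 := by omega
  rw [hKw]
  apply sum_flip (u := w) (by omega) (by omega)
  intro j _
  have hfv : fvec N (j ^^^ 2^w) = fvec N j := by
    unfold fvec
    have : EF (j ^^^ 2^w) ↔ EF j := by
      constructor <;> intro h p hp
      · rw [← h p hp, xor_bit_other j (by omega)]
      · rw [xor_bit_other j (by omega)]
        exact h p hp
    by_cases h : EF j
    · rw [if_pos h, if_pos (this.mpr h)]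
    · rw [if_neg h, if_neg (fun hc => h (this.mp hc))]
  rw [hfv, xor_bit_self]
  cases hb : j.testBit w <;> simp [hb]

lemma fvec_sum_odd {N ℓ i : ℕ} (hN : N % 2 = 0) (hℓ : ℓ < N) (hpar : ℓ % 2 = 1)
    (hi : i < 2^ℓ) :
    ∑ j ∈ (Finset.range (2^N)).filter (fun j => j / 2^(N-ℓ) = i),
      (if j.testBit (N-ℓ-1) then -(fvec N j) else fvec N j)
    = if Codd i then (2:ℝ)^(N/2) * 2^((N-ℓ-1)/2) else 0 := by
  set w := N - ℓ - 1 with hw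
  have hKw : N - ℓ = w + 1 := by omega
  have hweven : w % 2 = 0 := by omega
  rw [hKw]
  have step : ∀ j ∈ (Finset.range (2^N)).filter (fun j => j / 2^(w+1) = i),
      (if j.testBit w then -(fvec N j) else fvec N j)
        = if EF j then (2:ℝ)^(N/2) else 0 := by
    intro j _
    unfold fvec
    by_cases h : EF j
    · have hbit : j.testBit w = false := h w hweven
      simp only [if_pos h, hbit]
      simp
    · simp only [if_neg h]
      simp
  rw [Finset.sum_congr rfl step, Finset.sum_ite, Finset.sum_const_zero, add_zero,
    Finset.sum_const, Finset.filter_filter]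
  by_cases hc : Codd i
  · rw [if_pos hc, card_EF_block (by omega) hweven (by rw [(by omega : N - (w+1) = ℓ)]; exact hi) hc,
      nsmul_eq_mul, Nat.cast_pow, Nat.cast_ofNat, mul_comm]
  · rw [if_neg hc]
    have : ∃ t, t % 2 = 1 ∧ i.testBit t = true := by
      unfold Codd at hc
      push_neg at hc
      obtain ⟨t, ht1, ht2⟩ := hc
      exact ⟨t, ht1, by simpa using ht2⟩
    obtain ⟨t, ht1, ht2⟩ := this
    rw [block_EF_empty ht2 (by omega : ((w+1) + t) % 2 = 0), Finset.card_empty, zero_smul]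


-- ## Haar coefficients of f and g
lemma pow_div_pow_eq {a b N c : ℕ} (h : a + b + c = N) :
    (2:ℝ)^a * 2^b / 2^N = ((2:ℝ)^c)⁻¹ := by
  have : (2:ℝ)^N = 2^a * 2^b * 2^c := by
    rw [← pow_add, ← pow_add, h]
  rw [this]
  have h1 : ((2:ℝ)^a) ≠ 0 := by positivity
  have h2 : ((2:ℝ)^b) ≠ 0 := by positivity
  have h3 : ((2:ℝ)^c) ≠ 0 := by positivity
  field_simp

lemma hcoef_f_root {n : ℕ} : hcoef (Fstep (4*n) (fvec (4*n))) .root = 1 := by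
  rw [hcoef_Fstep_root, fvec_sum_root (by omega)]
  field_simp

lemma hcoef_f_node {n ℓ i : ℕ} (hℓ : ℓ < 4*n) (hi : i < 2^ℓ) :
    hcoef (Fstep (4*n) (fvec (4*n))) (.node ℓ i)
      = if ℓ % 2 = 1 ∧ Codd i then ((2:ℝ)^((ℓ+1)/2))⁻¹ else 0 := by
  rw [hcoef_Fstep_node_lt hℓ]
  rcases Nat.even_or_odd ℓ with he | ho
  · have hpar : ℓ % 2 = 0 := Nat.even_iff.mp he
    rw [fvec_sum_even (by omega) hℓ hpar, zero_div, if_neg]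
    rintro ⟨h1, _⟩
    omega
  · have hpar : ℓ % 2 = 1 := Nat.odd_iff.mp ho
    rw [fvec_sum_odd (by omega) hℓ hpar hi]
    by_cases hc : Codd i
    · rw [if_pos hc, if_pos ⟨hpar, hc⟩]
      exact pow_div_pow_eq (by omega)
    · rw [if_neg hc, if_neg (fun h => hc h.2), zero_div]

lemma hcoef_g_root {n : ℕ} (hn : 1 ≤ n) : hcoef (Fstep (4*n) (gvec n)) .root = 0 := by
  rw [hcoef_Fstep_root]
  unfold gvec
  rw [Finset.sum_comm]
  rw [Finset.sum_eq_zero, zero_div]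
  intro k hk
  rw [Finset.mem_Icc] at hk
  apply sum_flip_range (u := 4*n - 2*(2*k)) (by omega)
  intro j _
  exact dvc_xor_sign

lemma hcoef_g_node {n ℓ i : ℕ} (hn : 1 ≤ n) (hℓ : ℓ < 4*n) (hi : i < 2^ℓ) :
    hcoef (Fstep (4*n) (gvec n)) (.node ℓ i)
      = if (ℓ+1) % 4 = 0 ∧ Codd i then ((2:ℝ)^((ℓ+1)/2))⁻¹ else 0 := by
  rw [hcoef_Fstep_node_lt hℓ]
  have hswap : ∀ j, (if j.testBit (4*n-ℓ-1) then -(gvec n j) else gvec n j)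
      = ∑ k ∈ Finset.Icc 1 n, (if j.testBit (4*n-ℓ-1) then -(dvc (4*n) (2*k) j) else dvc (4*n) (2*k) j) := by
    intro j
    cases hb : j.testBit (4*n-ℓ-1)
    · simp only [hb, Bool.false_eq_true, if_false]
      rfl
    · simp only [hb, if_true]
      unfold gvec
      rw [← Finset.sum_neg_distrib]
  simp only [hswap]
  rw [Finset.sum_comm]
  by_cases hc : (ℓ+1) % 4 = 0 ∧ Codd i
  · obtain ⟨hmod, hcodd⟩ := hc
    set k₀ := (ℓ+1)/4 with hk₀
    have hk₀mem : k₀ ∈ Finset.Icc 1 n := by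
      rw [Finset.mem_Icc]
      omega
    rw [Finset.sum_eq_single_of_mem k₀ hk₀mem]
    · rw [piece_sum_eq (by omega) (by omega) (by omega) hℓ hi, if_pos hcodd, if_pos ⟨hmod, hcodd⟩]
      apply pow_div_pow_eq
      omega
    · intro k hk hne
      rw [Finset.mem_Icc] at hk
      apply piece_sum_ne (by omega) (by omega) hℓ
      omega
  · rw [if_neg hc, Finset.sum_eq_zero, zero_div]
    intro k hk
    rw [Finset.mem_Icc] at hk
    by_cases heq : ℓ + 1 = 2*(2*k)
    · rw [piece_sum_eq (by omega) (by omega) heq hℓ hi, if_neg]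
      intro hcodd
      exact hc ⟨by omega, hcodd⟩
    · exact piece_sum_ne (by omega) (by omega) hℓ heq


lemma npow_pred {a : ℕ} (h : 1 ≤ a) : (2:ℕ)^a = 2 * 2^(a-1) := by
  obtain ⟨b, rfl⟩ : ∃ b, a = b + 1 := ⟨a-1, by omega⟩
  rw [pow_succ, Nat.add_sub_cancel]
  ring

lemma rpow_pred2 {a : ℕ} (h : 2 ≤ a) : (2:ℝ)^a = 2^(a-2) * 4 := by
  obtain ⟨b, rfl⟩ : ∃ b, a = b + 2 := ⟨a-2, by omega⟩
  rw [pow_add, Nat.add_sub_cancel]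
  norm_num

lemma integral_abs_f {n : ℕ} : ∫ x, |Fstep (4*n) (fvec (4*n)) x| = 1 := by
  rw [integral_abs_Fstep]
  have habs : ∀ j, |fvec (4*n) j| = fvec (4*n) j := by
    intro j
    apply abs_of_nonneg
    unfold fvec
    by_cases h : EF j
    · rw [if_pos h]; positivity
    · rw [if_neg h]
  simp only [habs]
  rw [fvec_sum_root (by omega)]
  field_simp

/-- the level sets -/
def Sset (n t : ℕ) : Finset ℕ :=
  (Finset.range (2^(4*n))).filter (fun j => ec (4*n - (4*t - 2)) j ∧ ¬ ec (4*n - (4*t + 2)) j)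

lemma card_Sset {n t : ℕ} (h1 : 1 ≤ t) (h2 : t ≤ n) :
    2^(4*n - 2*t) ≤ (Sset n t).card := by
  have hsd : Sset n t = ((Finset.range (2^(4*n))).filter (ec (4*n - (4*t - 2))))
      \ ((Finset.range (2^(4*n))).filter (ec (4*n - (4*t + 2)))) := by
    ext j
    simp only [Sset, Finset.mem_filter, Finset.mem_sdiff, Finset.mem_range]
    tauto
  have hsub : ((Finset.range (2^(4*n))).filter (ec (4*n - (4*t + 2))))
      ⊆ ((Finset.range (2^(4*n))).filter (ec (4*n - (4*t - 2)))) := by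
    intro j hj
    rw [Finset.mem_filter] at hj ⊢
    exact ⟨hj.1, ec_mono (by omega) hj.2⟩
  rw [hsd, Finset.card_sdiff_of_subset hsub, card_ec (by omega) (by omega), card_ec (by omega) (by omega)]
  have hA : (4*n + (4*n - (4*t - 2)))/2 = 4*n - 2*t + 1 := by omega
  rw [hA]
  rcases Nat.lt_or_ge t n with hlt | hge
  · have hB : (4*n + (4*n - (4*t + 2)))/2 = 4*n - 2*t - 1 := by omega
    rw [hB]
    have e1 : (2:ℕ)^(4*n - 2*t + 1) = 2 * 2^(4*n - 2*t) := by rw [pow_succ]; ring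
    have e2 : (2:ℕ)^(4*n - 2*t) = 2 * 2^(4*n - 2*t - 1) := npow_pred (by omega)
    omega
  · have htn : t = n := by omega
    have hB : (4*n + (4*n - (4*t + 2)))/2 = 2*n := by omega
    rw [hB]
    have k1 : 4*n - 2*t = 2*n := by omega
    rw [k1]
    have e1 : (2:ℕ)^(2*n + 1) = 2 * 2^(2*n) := by rw [pow_succ]; ring
    omega

lemma Sset_disjoint {n t t' : ℕ} (h1 : 1 ≤ t) (ht : t < t') :
    Disjoint (Sset n t) (Sset n t') := by
  rw [Finset.disjoint_left]
  intro j hj hj'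
  simp only [Sset, Finset.mem_filter] at hj hj'
  exact hj.2.2 (ec_mono (by omega) hj'.2.1)

lemma geom_bound : ∀ s : ℕ, ∑ k ∈ Finset.Icc 1 s, (2:ℝ)^(2*k-1) ≤ (2:ℝ)^(2*s) - 1 := by
  intro s
  induction s with
  | zero => simp
  | succ s ih =>
    rw [Finset.sum_Icc_succ_top (by omega)]
    have e1 : (2:ℝ)^(2*(s+1)) = 4 * 2^(2*s) := by
      rw [(by omega : 2*(s+1) = 2*s + 2), pow_add]; ring
    have e2 : (2:ℝ)^(2*(s+1)-1) = 2 * 2^(2*s) := by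
      rw [(by omega : 2*(s+1)-1 = 2*s + 1), pow_add]; ring
    have e3 : (0:ℝ) < 2^(2*s) := by positivity
    rw [e1, e2]
    linarith

lemma gvec_lower {n t j : ℕ} (h1 : 1 ≤ t) (h2 : t ≤ n) (hj : j ∈ Sset n t) :
    (2:ℝ)^(2*t-2) ≤ |gvec n j| := by
  obtain ⟨s, rfl⟩ : ∃ s, t = s + 1 := ⟨t-1, by omega⟩
  simp only [Sset, Finset.mem_filter] at hj
  obtain ⟨hjr, hec, hnec⟩ := hj
  have hzero : ∀ k, s + 1 < k → k ≤ n → dvc (4*n) (2*k) j = 0 := by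
    intro k hk1 hk2
    unfold dvc
    rw [if_neg]
    intro hecc
    exact hnec (ec_mono (by omega) hecc)
  have hval : ∀ k, 1 ≤ k → k ≤ s + 1 → |dvc (4*n) (2*k) j| = (2:ℝ)^(2*k-1) := by
    intro k hk1 hk2
    unfold dvc
    rw [if_pos (ec_mono (by omega) hec)]
    cases hb : j.testBit (4*n - 2*(2*k))
    · simp only [hb, Bool.false_eq_true, if_false]
      exact abs_of_nonneg (by positivity)
    · simp only [hb, if_true, abs_neg]
      exact abs_of_nonneg (by positivity)
  have hsplit : gvec n j = (∑ k ∈ Finset.Icc 1 s, dvc (4*n) (2*k) j) + dvc (4*n) (2*(s+1)) j := by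
    unfold gvec
    have hun : Finset.Icc 1 n = Finset.Icc 1 (s+1) ∪ Finset.Icc (s+2) n := by
      ext k
      simp only [Finset.mem_Icc, Finset.mem_union]
      omega
    rw [hun, Finset.sum_union (by
      rw [Finset.disjoint_left]
      intro a ha hb
      simp only [Finset.mem_Icc] at ha hb
      omega)]
    have hz : ∑ k ∈ Finset.Icc (s+2) n, dvc (4*n) (2*k) j = 0 := by
      apply Finset.sum_eq_zero
      intro k hk
      rw [Finset.mem_Icc] at hk
      exact hzero k (by omega) hk.2
    rw [hz, add_zero, Finset.sum_Icc_succ_top (by omega)]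
  rw [hsplit]
  have hd : |dvc (4*n) (2*(s+1)) j| = (2:ℝ)^(2*(s+1)-1) := hval (s+1) (by omega) le_rfl
  have hs : |∑ k ∈ Finset.Icc 1 s, dvc (4*n) (2*k) j| ≤ (2:ℝ)^(2*s) - 1 := by
    calc |∑ k ∈ Finset.Icc 1 s, dvc (4*n) (2*k) j|
        ≤ ∑ k ∈ Finset.Icc 1 s, |dvc (4*n) (2*k) j| := Finset.abs_sum_le_sum_abs _ _
      _ = ∑ k ∈ Finset.Icc 1 s, (2:ℝ)^(2*k-1) := by
          apply Finset.sum_congr rfl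
          intro k hk
          rw [Finset.mem_Icc] at hk
          exact hval k hk.1 (by omega)
      _ ≤ (2:ℝ)^(2*s) - 1 := geom_bound s
  have e1 : (2:ℝ)^(2*(s+1)-1) = 2 * 2^(2*s) := by
    have h : 2*(s+1)-1 = 2*s + 1 := by omega
    rw [h, pow_succ]; ring
  have e2 : (2:ℝ)^(2*(s+1)-2) = 2^(2*s) := by
    have h : 2*(s+1)-2 = 2*s := by omega
    rw [h]
  rw [e2]
  calc (2:ℝ)^(2*s) = 2 * 2^(2*s) - ((2:ℝ)^(2*s) - 1) - 1 := by ring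
    _ ≤ |dvc (4*n) (2*(s+1)) j| - |∑ k ∈ Finset.Icc 1 s, dvc (4*n) (2*k) j| - 1 := by
        rw [hd, e1]; linarith
    _ ≤ |(∑ k ∈ Finset.Icc 1 s, dvc (4*n) (2*k) j) + dvc (4*n) (2*(s+1)) j| := by
        have htri := abs_add_le ((∑ k ∈ Finset.Icc 1 s, dvc (4*n) (2*k) j) + dvc (4*n) (2*(s+1)) j)
          (-(∑ k ∈ Finset.Icc 1 s, dvc (4*n) (2*k) j))
        rw [abs_neg] at htri
        have hcan : (∑ k ∈ Finset.Icc 1 s, dvc (4*n) (2*k) j) + dvc (4*n) (2*(s+1)) j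
            + -(∑ k ∈ Finset.Icc 1 s, dvc (4*n) (2*k) j) = dvc (4*n) (2*(s+1)) j := by ring
        rw [hcan] at htri
        linarith

lemma integral_abs_g {n : ℕ} (hn : 1 ≤ n) :
    (n : ℝ) / 4 ≤ ∫ x, |Fstep (4*n) (gvec n) x| := by
  rw [integral_abs_Fstep]
  have hmain : (n : ℝ) * 2^(4*n-2) ≤ ∑ j ∈ Finset.range (2^(4*n)), |gvec n j| := by
    have hsub : (Finset.Icc 1 n).biUnion (Sset n) ⊆ Finset.range (2^(4*n)) := by
      intro j hj
      rw [Finset.mem_biUnion] at hj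
      obtain ⟨t, _, hjt⟩ := hj
      simp only [Sset, Finset.mem_filter] at hjt
      exact hjt.1
    calc (n:ℝ) * 2^(4*n-2)
        = ∑ t ∈ Finset.Icc 1 n, ((2:ℝ)^(2*t-2) * (2:ℝ)^(4*n-2*t)) := by
          have hconst : ∀ t ∈ Finset.Icc 1 n,
              (2:ℝ)^(2*t-2) * (2:ℝ)^(4*n-2*t) = (2:ℝ)^(4*n-2) := by
            intro t ht
            rw [Finset.mem_Icc] at ht
            rw [← pow_add]
            congr 1
            omega
          rw [Finset.sum_congr rfl hconst, Finset.sum_const, Nat.card_Icc, nsmul_eq_mul,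
            (by omega : n + 1 - 1 = n)]
      _ ≤ ∑ t ∈ Finset.Icc 1 n, ∑ j ∈ Sset n t, |gvec n j| := by
          apply Finset.sum_le_sum
          intro t ht
          rw [Finset.mem_Icc] at ht
          calc (2:ℝ)^(2*t-2) * (2:ℝ)^(4*n-2*t)
              ≤ (2:ℝ)^(2*t-2) * ((Sset n t).card : ℝ) := by
                apply mul_le_mul_of_nonneg_left _ (by positivity)
                exact_mod_cast card_Sset ht.1 ht.2
            _ = ∑ _j ∈ Sset n t, (2:ℝ)^(2*t-2) := by
                rw [Finset.sum_const, nsmul_eq_mul, mul_comm]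
            _ ≤ ∑ j ∈ Sset n t, |gvec n j| :=
                Finset.sum_le_sum (fun j hj => gvec_lower ht.1 ht.2 hj)
      _ = ∑ j ∈ (Finset.Icc 1 n).biUnion (Sset n), |gvec n j| := by
          rw [Finset.sum_biUnion]
          intro t ht t' ht' hne
          rw [Finset.mem_coe, Finset.mem_Icc] at ht ht'
          rcases Nat.lt_or_ge t t' with h | h
          · exact Sset_disjoint ht.1 h
          · exact (Sset_disjoint ht'.1 (by omega)).symm
      _ ≤ ∑ j ∈ Finset.range (2^(4*n)), |gvec n j| := by
          apply Finset.sum_le_sum_of_subset_of_nonneg hsub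
          intro j _ _
          exact abs_nonneg _
  rw [div_le_div_iff₀ (by norm_num) (by positivity : (0:ℝ) < 2^(4*n)),
    rpow_pred2 (by omega : 2 ≤ 4*n)]
  nlinarith [hmain]


-- ## the admissible set A
def Aset (n : ℕ) : Set HIdx :=
  {I | ∃ ℓ i, I = HIdx.node ℓ i ∧ ℓ < 4*n ∧ (ℓ+1) % 4 = 0 ∧ i < 2^ℓ ∧ Codd i}

lemma hcoef_f_on_A {n : ℕ} {I : HIdx} (hI : I ∈ Aset n) :
    I.valid ∧ hcoef (Fstep (4*n) (fvec (4*n))) I = ((2:ℝ)^((I.casesOn 0 (fun ℓ _ => ℓ) + 1)/2))⁻¹ := by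
  obtain ⟨ℓ, i, rfl, h1, h2, h3, h4⟩ := hI
  refine ⟨h3, ?_⟩
  rw [hcoef_f_node h1 h3, if_pos ⟨by omega, h4⟩]

lemma iset_inj {K : HIdx} (hK : K.valid) {b q : ℕ} (hq : q < 2^b)
    (h : K.iset = dyadic b q) : K = HIdx.node b q := by
  cases K with
  | root =>
    exfalso
    have h32 : (3/2 : ℝ) ∈ Set.Ico (0:ℝ) 2 := by norm_num
    have : (3/2 : ℝ) ∈ dyadic b q := h ▸ h32
    have := dyadic_subset_unit hq this
    simp only [Set.mem_Ico] at this
    linarith [this.2]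
  | node b' q' =>
    have hval : q' < 2^b' := hK
    have hlt : ((q':ℝ)) / 2^b' < ((q':ℝ)+1) / 2^b' := by
      have := two_pow_pos b'
      rw [div_lt_div_iff₀ this this]
      nlinarith
    have heq := (Set.Ico_eq_Ico_iff (Or.inl hlt)).mp h
    obtain ⟨e1, e2⟩ := heq
    have hb : (2:ℝ)^b' = 2^b := by
      have h1 := two_pow_pos b'
      have h2 := two_pow_pos b
      field_simp at e1 e2
      nlinarith [e1, e2]
    have hbb : b' = b := by
      have hnat : (2:ℕ)^b' = 2^b := by exact_mod_cast hb
      exact Nat.pow_right_injective (by norm_num) hnat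
    subst hbb
    have hqq : q' = q := by
      have h1 := two_pow_pos b'
      field_simp at e1
      exact_mod_cast e1
    rw [hqq]

lemma henlarge_eq {n : ℕ} (hn : 1 ≤ n) {ε : ℝ} (hε0 : 0 < ε) (hε1 : ε < 1) :
    henlarge (Fstep (4*n) (fvec (4*n))) (Aset n) ε = Aset n := by
  apply Set.Subset.antisymm
  · rintro J ⟨hJval, I, hIA, hsub, hall⟩
    obtain ⟨ℓ, i, rfl, h1, h2, h3, h4⟩ := hIA
    have hℓ3 : 3 ≤ ℓ := by omega
    have hival : i / 2 < 2^(ℓ-1) := by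
      have := npow_pred (by omega : 1 ≤ ℓ)
      omega
    -- the parent has coefficient 0
    have hK₀val : (HIdx.node (ℓ-1) (i/2)).valid := hival
    have hK₀coef : hcoef (Fstep (4*n) (fvec (4*n))) (HIdx.node (ℓ-1) (i/2)) = 0 := by
      rw [hcoef_f_node (by omega) hival, if_neg]
      rintro ⟨hp, _⟩
      omega
    have hIK₀ : dyadic ℓ i ⊆ dyadic (ℓ-1) (i/2) := by
      have := dyadic_subset_div (by omega : ℓ-1 ≤ ℓ) i
      rw [(by omega : ℓ - (ℓ-1) = 1), pow_one] at this
      exact this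
    have hcI : hcoef (Fstep (4*n) (fvec (4*n))) (HIdx.node ℓ i) = ((2:ℝ)^((ℓ+1)/2))⁻¹ := by
      rw [hcoef_f_node h1 h3, if_pos ⟨by omega, h4⟩]
    have hcontr : ∀ _hsubK : dyadic (ℓ-1) (i/2) ⊆ J.iset, False := by
      intro hsubK
      have hlt := hall (HIdx.node (ℓ-1) (i/2)) hK₀val hIK₀ hsubK
      rw [hK₀coef, hcI, zero_sub, abs_neg] at hlt
      have hc : (0:ℝ) < ((2:ℝ)^((ℓ+1)/2))⁻¹ := by positivity
      rw [abs_of_pos hc] at hlt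
      nlinarith
    cases J with
    | root =>
      refine (hcontr ?_).elim
      refine subset_trans (dyadic_subset_unit hival) ?_
      intro x hx
      exact ⟨hx.1, by linarith [hx.2]⟩
    | node s q =>
      have helim := dyadic_subset_elim (show dyadic ℓ i ⊆ dyadic s q from hsub)
      obtain ⟨hsl, hq⟩ := helim
      rcases eq_or_lt_of_le hsl with heq | hlt
      · subst heq
        have hiq : i = q := by
          rw [(by omega : s - s = 0), pow_zero, Nat.div_one] at hq
          exact hq
        subst hiq
        exact ⟨s, i, rfl, h1, h2, h3, h4⟩
      · refine (hcontr ?_).elim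
        have h2' := dyadic_subset_div (by omega : s ≤ ℓ-1) (i/2)
        have hqq : (i/2) / 2^(ℓ-1-s) = q := by
          rw [← hq, Nat.div_div_eq_div_mul]
          congr 1
          rw [← pow_succ']
          congr 1
          omega
        rw [hqq] at h2'
        exact h2'
  · rintro J hJA
    have hJA' := hJA
    obtain ⟨ℓ, i, rfl, h1, h2, h3, h4⟩ := hJA'
    have hcJ : hcoef (Fstep (4*n) (fvec (4*n))) (HIdx.node ℓ i) = ((2:ℝ)^((ℓ+1)/2))⁻¹ := by
      rw [hcoef_f_node h1 h3, if_pos ⟨by omega, h4⟩]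
    refine ⟨h3, HIdx.node ℓ i, hJA, le_refl _, ?_⟩
    intro K hKval hsub1 hsub2
    have hKeq : K = HIdx.node ℓ i := iset_inj hKval h3 (Set.Subset.antisymm hsub2 hsub1)
    rw [hKeq, sub_self, abs_zero, hcJ]
    have : (0:ℝ) < ((2:ℝ)^((ℓ+1)/2))⁻¹ := by positivity
    rw [abs_of_pos this]
    positivity


end Dy

open Dy

/-- Lower bound: for `δ = 2^{-2n}` there are norm-one `f` with all nonzero Haar coefficients
of modulus `≥ δ` and `A ⊆ supp_H(f)` with `A_ε(f) = A` for all `0 < ε < 1`, while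
`‖P_A(f)‖ ≥ cn ≥ c' log(1/δ)`. -/
theorem stmt16 : ∃ c : ℝ, 0 < c ∧ ∃ c' : ℝ, 0 < c' ∧ ∀ n : ℕ, 1 ≤ n →
    ∃ f : ℝ → ℝ, Integrable f ∧ (∀ x, x ∉ Set.Ico (0 : ℝ) 1 → f x = 0) ∧
      (∫ x, |f x|) = 1 ∧
      (∀ I : HIdx, I.valid → hcoef f I ≠ 0 → ((2 : ℝ) ^ (2 * n))⁻¹ ≤ |hcoef f I|) ∧
      ∃ A : Set HIdx, (∀ I ∈ A, I.valid ∧ hcoef f I ≠ 0) ∧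
        (∀ ε : ℝ, 0 < ε → ε < 1 → henlarge f A ε = A) ∧
        ∃ g : ℝ → ℝ, Integrable g ∧ (∀ x, x ∉ Set.Ico (0 : ℝ) 1 → g x = 0) ∧
          (∀ I : HIdx, I.valid →
            ((I ∈ A → hcoef g I = hcoef f I) ∧ (I ∉ A → hcoef g I = 0))) ∧
          c * n ≤ (∫ x, |g x|) ∧ c' * Real.log ((2 : ℝ) ^ (2 * n)) ≤ c * n := by
  refine ⟨1/4, by norm_num, 1/8, by norm_num, ?_⟩
  intro n hn
  refine ⟨Fstep (4*n) (fvec (4*n)), Fstep_integrable _ _,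
    fun x hx => Fstep_outside _ _ hx, integral_abs_f, ?_, Aset n, ?_, ?_,
    Fstep (4*n) (gvec n), Fstep_integrable _ _, fun x hx => Fstep_outside _ _ hx,
    ?_, ?_, ?_⟩
  · -- lower bound on nonzero coefficients
    intro I hval hne
    cases I with
    | root =>
      rw [hcoef_f_root]
      rw [abs_one]
      apply inv_le_one_of_one_le₀
      have : (1:ℝ) ≤ 2 := by norm_num
      exact one_le_pow₀ this
    | node ℓ i =>
      have hival : i < 2^ℓ := hval
      rcases Nat.lt_or_ge ℓ (4*n) with hlt | hge
      · rw [hcoef_f_node hlt hival] at hne ⊢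
        by_cases hcond : ℓ % 2 = 1 ∧ Codd i
        · rw [if_pos hcond] at hne ⊢
          have hpos : (0:ℝ) < ((2:ℝ)^((ℓ+1)/2))⁻¹ := by positivity
          rw [abs_of_pos hpos]
          apply inv_anti₀ (by positivity)
          apply pow_le_pow_right₀ (by norm_num)
          omega
        · rw [if_neg hcond] at hne
          exact absurd rfl hne
      · rw [hcoef_Fstep_node_ge hge hival] at hne
        exact absurd rfl hne
  · -- A consists of valid indices with nonzero coefficient
    intro I hI
    obtain ⟨ℓ, i, rfl, h1, h2, h3, h4⟩ := hI
    refine ⟨h3, ?_⟩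
    rw [hcoef_f_node h1 h3, if_pos ⟨by omega, h4⟩]
    positivity
  · -- enlargement equality
    intro ε hε0 hε1
    exact henlarge_eq hn hε0 hε1
  · -- g is the projection of f onto A
    intro I hval
    constructor
    · intro hIA
      obtain ⟨ℓ, i, rfl, h1, h2, h3, h4⟩ := hIA
      rw [hcoef_g_node hn h1 h3, hcoef_f_node h1 h3, if_pos ⟨h2, h4⟩, if_pos ⟨by omega, h4⟩]
    · intro hnotA
      cases I with
      | root => exact hcoef_g_root hn
      | node ℓ i =>
        have hival : i < 2^ℓ := hval
        rcases Nat.lt_or_ge ℓ (4*n) with hlt | hge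
        · rw [hcoef_g_node hn hlt hival, if_neg]
          rintro ⟨hm4, hcodd⟩
          exact hnotA ⟨ℓ, i, rfl, hlt, hm4, hival, hcodd⟩
        · exact hcoef_Fstep_node_ge hge hival _
  · -- norm lower bound
    have := integral_abs_g (n := n) hn
    calc (1/4 : ℝ) * n = n / 4 := by ring
      _ ≤ _ := this
  · -- log comparison
    rw [Real.log_pow]
    have hlog := Real.log_two_lt_d9
    have hnn : (0:ℝ) ≤ (n:ℝ) := Nat.cast_nonneg n
    have hmul : (n:ℝ) * Real.log 2 ≤ (n:ℝ) * 1 := by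
      apply mul_le_mul_of_nonneg_left _ hnn
      linarith
    push_cast
    nlinarith
end
end

section
/- A semi-normalized basis (e_i) of a Banach space X is near-unconditional (for all δ ∈ (0,1] there is C(δ) such that ‖P_A(x)‖ ≤ C(δ)‖x‖ whenever sup|a_i| ≤ 1, x = Σ a_i e_i, and A ⊆ {i : |a_i| ≥ δ} is finite) if and only if the thresholding operators are bounded: for all δ there is C₁(δ) with ‖G_δ(x)‖ ≤ C₁(δ)‖x‖ for all x with sup|a_i| ≤ 1, where G_δ(x) = Σ_{|a_i| ≥ δ} a_i e_i. -/
open Filter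

section AuxStmt17
variable {X : Type*} [NormedAddCommGroup X] [NormedSpace ℝ X]


/-- Thresholding bound predicate: the projection onto the set of coordinates of size `≥ t`
is bounded by `C` on vectors with coefficients bounded by 1. -/
def Thr (e : ℕ → X) (a : X → ℕ → ℝ) (t C : ℝ) : Prop :=
  ∀ v : X, (∀ i, |a v i| ≤ 1) → ∀ A : Finset ℕ,
    (∀ i, i ∈ A ↔ t ≤ |a v i|) → ‖∑ i ∈ A, a v i • e i‖ ≤ C * ‖v‖

theorem thr_mono {e : ℕ → X} {a : X → ℕ → ℝ} {t C C' : ℝ} (h : Thr e a t C) (hCC : C ≤ C') :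
    Thr e a t C' := fun v hv A hA =>
  (h v hv A hA).trans (mul_le_mul_of_nonneg_right hCC (norm_nonneg v))

/-- Coefficients of a linear combination `c • x + ∑_{j ∈ F} w j • e j`. -/
theorem coeff_combo {e : ℕ → X} {a : X → ℕ → ℝ}
    (hbasis : ∀ x : X, Tendsto (fun N => ∑ i ∈ Finset.range N, a x i • e i) atTop (nhds x))
    (huniq : ∀ (x : X) (c : ℕ → ℝ),
      Tendsto (fun N => ∑ i ∈ Finset.range N, c i • e i) atTop (nhds x) → c = a x)
    (c : ℝ) (x : X) (F : Finset ℕ) (w : ℕ → ℝ) :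
    ∀ i, a (c • x + ∑ j ∈ F, w j • e j) i = c * a x i + (if i ∈ F then w i else 0) := by
  have h1 : Tendsto (fun N => ∑ j ∈ Finset.range N, (c * a x j) • e j) atTop (nhds (c • x)) := by
    have h := (hbasis x).const_smul c
    simp only [Finset.smul_sum, smul_smul] at h
    exact h
  have h2 : Tendsto (fun N => ∑ j ∈ Finset.range N, (if j ∈ F then w j else 0) • e j)
      atTop (nhds (∑ j ∈ F, w j • e j)) := by
    apply tendsto_atTop_of_eventually_const (i₀ := F.sup id + 1)
    intro N hN
    have hFsub : F ⊆ Finset.range N := fun j hj =>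
      Finset.mem_range.mpr (lt_of_lt_of_le (Nat.lt_succ_of_le (Finset.le_sup (f := id) hj)) hN)
    calc ∑ j ∈ Finset.range N, (if j ∈ F then w j else 0) • e j
        = ∑ j ∈ Finset.range N, (if j ∈ F then w j • e j else 0) := by
          apply Finset.sum_congr rfl; intro j _; split <;> simp
      _ = ∑ j ∈ (Finset.range N).filter (fun j => j ∈ F), w j • e j := by
          rw [Finset.sum_filter]
      _ = ∑ j ∈ F, w j • e j := by
          rw [Finset.filter_mem_eq_inter, Finset.inter_eq_right.mpr hFsub]
  have h3 := h1.add h2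
  have heq : (fun N => (∑ j ∈ Finset.range N, (c * a x j) • e j) +
      ∑ j ∈ Finset.range N, (if j ∈ F then w j else 0) • e j) =
      fun N => ∑ j ∈ Finset.range N, (c * a x j + (if j ∈ F then w j else 0)) • e j := by
    funext N
    rw [← Finset.sum_add_distrib]
    apply Finset.sum_congr rfl
    intro j _
    rw [add_smul]
  rw [heq] at h3
  have hres := huniq _ _ h3
  intro i
  exact (congrFun hres i).symm

/-- The set of coordinates of size at least `t > 0` is finite (realized as a Finset). -/
theorem bigFin {e : ℕ → X} {a : X → ℕ → ℝ}
    (hbasis : ∀ x : X, Tendsto (fun N => ∑ i ∈ Finset.range N, a x i • e i) atTop (nhds x))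
    {m : ℝ} (hm : 0 < m) (hmlb : ∀ i, m ≤ ‖e i‖)
    (x : X) (t : ℝ) (ht : 0 < t) :
    ∃ A : Finset ℕ, ∀ i, i ∈ A ↔ t ≤ |a x i| := by
  have hterm : Tendsto (fun N => a x N • e N) atTop (nhds 0) := by
    have h1 := hbasis x
    have h2 := h1.comp (tendsto_add_atTop_nat 1)
    have h3 := h2.sub h1
    simp only [sub_self] at h3
    have heq : (fun N => (∑ i ∈ Finset.range (N + 1), a x i • e i)
        - ∑ i ∈ Finset.range N, a x i • e i) = fun N => a x N • e N := by
      funext N; rw [Finset.sum_range_succ]; abel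
    have h4 : Tendsto (fun N => (∑ i ∈ Finset.range (N + 1), a x i • e i)
        - ∑ i ∈ Finset.range N, a x i • e i) atTop (nhds 0) := h3
    rwa [heq] at h4
  have hnorm : Tendsto (fun N => ‖a x N • e N‖) atTop (nhds 0) :=
    tendsto_zero_iff_norm_tendsto_zero.mp hterm
  have hev : ∀ᶠ N in atTop, ‖a x N • e N‖ < t * m :=
    hnorm.eventually (gt_mem_nhds (by positivity))
  obtain ⟨N₀, hN₀⟩ := eventually_atTop.mp hev
  refine ⟨(Finset.range N₀).filter (fun i => t ≤ |a x i|), ?_⟩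
  intro i
  simp only [Finset.mem_filter, Finset.mem_range]
  constructor
  · exact fun h => h.2
  · intro h
    refine ⟨?_, h⟩
    by_contra hlt
    push_neg at hlt
    have hsmall := hN₀ i hlt
    rw [norm_smul, Real.norm_eq_abs] at hsmall
    have h1 : t * m ≤ |a x i| * ‖e i‖ :=
      mul_le_mul h (hmlb i) (le_of_lt hm) (abs_nonneg _)
    linarith


set_option maxHeartbeats 1600000 in
/-- A threshold bound at an anchor level `t₀ ≤ 2/3` extends, with a worse constant,
to all levels in a neighbourhood of `t₀`. -/
theorem nbhd {e : ℕ → X} {a : X → ℕ → ℝ}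
    (hcc : ∀ (c : ℝ) (x : X) (F : Finset ℕ) (w : ℕ → ℝ),
      ∀ i, a (c • x + ∑ j ∈ F, w j • e j) i = c * a x i + (if i ∈ F then w i else 0))
    (key0 : ∀ t : ℝ, 0 < t → t ≤ 1 → ∃ C : ℝ, 1 ≤ C ∧ Thr e a t C)
    (t₀ : ℝ) (h0 : 0 < t₀) (h23 : t₀ ≤ 2/3) :
    ∃ ε Mc : ℝ, 0 < ε ∧ ∀ s : ℝ, |s - t₀| < ε → Thr e a s Mc := by
  obtain ⟨c₀, hc₀, hthr⟩ := key0 t₀ h0 (h23.trans (by norm_num))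
  have hc₀0 : (0:ℝ) < c₀ := lt_of_lt_of_le one_pos hc₀
  obtain ⟨μ, hμdef⟩ : ∃ μ : ℝ, μ = 1 / (2 * c₀) := ⟨_, rfl⟩
  have hμ0 : 0 < μ := by rw [hμdef]; positivity
  have hμc : μ * c₀ = 1/2 := by
    rw [hμdef]; field_simp
  have hμhalf : μ ≤ 1/2 := by
    rw [hμdef, div_le_div_iff₀ (by positivity) (by norm_num)]
    linarith
  refine ⟨t₀ * μ / 2, 5 * c₀, by positivity, ?_⟩
  intro s hs x hx A hA
  have habs := abs_lt.mp hs
  rcases le_or_gt t₀ s with hcase | hcase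
  · -- upward case : t₀ ≤ s < t₀(1+μ)
    have htμ : (0:ℝ) ≤ t₀ * μ := by positivity
    have hst : s ≤ t₀ * (1 + μ) := by nlinarith [habs.2]
    obtain ⟨ν, hνdef⟩ : ∃ ν : ℝ, ν = μ / (1 + μ) := ⟨_, rfl⟩
    have h1μ : (0:ℝ) < 1 + μ := by linarith
    have hν0 : 0 < ν := by rw [hνdef]; positivity
    have hνμ : ν ≤ μ := by
      rw [hνdef, div_le_iff₀ h1μ]; nlinarith [mul_nonneg hμ0.le hμ0.le]
    have hν1 : ν < 1 := lt_of_le_of_lt hνμ (by linarith)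
    have hνhalf : μ / 2 ≤ ν := by
      rw [hνdef, le_div_iff₀ h1μ]
      nlinarith [mul_nonneg hμ0.le (by linarith : (0:ℝ) ≤ 1 - μ)]
    obtain ⟨v, hvdef⟩ : ∃ v : X, v = (1 - ν) • x + ∑ j ∈ A, (ν * a x j) • e j := ⟨_, rfl⟩
    have hav : ∀ i, a v i = (1 - ν) * a x i + (if i ∈ A then ν * a x i else 0) := by
      rw [hvdef]; exact hcc (1 - ν) x A (fun j => ν * a x j)
    have havA : ∀ i ∈ A, a v i = a x i := by
      intro i hi; rw [hav i, if_pos hi]; ring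
    have havN : ∀ i, i ∉ A → a v i = (1 - ν) * a x i := by
      intro i hi; rw [hav i, if_neg hi, add_zero]
    have hvadm : ∀ i, |a v i| ≤ 1 := by
      intro i; by_cases hi : i ∈ A
      · rw [havA i hi]; exact hx i
      · rw [havN i hi, abs_mul, abs_of_pos (by linarith : (0:ℝ) < 1 - ν)]
        exact mul_le_one₀ (by linarith) (abs_nonneg _) (hx i)
    have hiff : ∀ i, i ∈ A ↔ t₀ ≤ |a v i| := by
      intro i; constructor
      · intro hi; rw [havA i hi]
        exact le_trans hcase ((hA i).mp hi)
      · intro hle; by_contra hni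
        have h3 : ¬ s ≤ |a x i| := fun hcon => hni ((hA i).mpr hcon)
        push_neg at h3
        rw [havN i hni, abs_mul, abs_of_pos (by linarith : (0:ℝ) < 1 - ν)] at hle
        have h4 : (1 - ν) * |a x i| < (1 - ν) * s :=
          mul_lt_mul_of_pos_left h3 (by linarith)
        have k1 : ν * t₀ ≤ ν * s := mul_le_mul_of_nonneg_left hcase hν0.le
        have k2 : (μ/2) * t₀ ≤ ν * t₀ := mul_le_mul_of_nonneg_right hνhalf h0.le
        have h5 : (1 - ν) * s ≤ t₀ := by linarith [habs.2]
        linarith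
    have hq := hthr v hvadm A hiff
    have hsumv : ∑ i ∈ A, a v i • e i = ∑ i ∈ A, a x i • e i :=
      Finset.sum_congr rfl (fun i hi => by rw [havA i hi])
    rw [hsumv] at hq
    obtain ⟨P, hPdef⟩ : ∃ P : X, P = ∑ i ∈ A, a x i • e i := ⟨_, rfl⟩
    rw [← hPdef] at hq
    have hvn : ‖v‖ ≤ (1 - ν) * ‖x‖ + ν * ‖P‖ := by
      rw [hvdef]
      have hsum : ∑ j ∈ A, (ν * a x j) • e j = ν • P := by
        rw [hPdef, Finset.smul_sum]
        exact Finset.sum_congr rfl (fun i _ => (mul_smul ν (a x i) (e i)))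
      rw [hsum]
      calc ‖(1 - ν) • x + ν • P‖ ≤ ‖(1 - ν) • x‖ + ‖ν • P‖ := norm_add_le _ _
        _ = (1 - ν) * ‖x‖ + ν * ‖P‖ := by
            rw [norm_smul, norm_smul, Real.norm_eq_abs, Real.norm_eq_abs,
              abs_of_pos (by linarith : (0:ℝ) < 1 - ν), abs_of_pos hν0]
    have hcν : c₀ * ν ≤ 1/2 := by
      have := mul_le_mul_of_nonneg_left hνμ hc₀0.le
      linarith [hμc]
    have hPx : ‖P‖ ≤ c₀ * ((1 - ν) * ‖x‖ + ν * ‖P‖) :=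
      hq.trans (mul_le_mul_of_nonneg_left hvn hc₀0.le)
    rw [← hPdef]
    have k3 : c₀ * (ν * ‖P‖) ≤ (1/2) * ‖P‖ := by
      have := mul_le_mul_of_nonneg_right hcν (norm_nonneg P)
      linarith [this]
    have k4 : (0:ℝ) ≤ c₀ * (ν * ‖x‖) := by positivity
    have k5 : (0:ℝ) ≤ c₀ * ‖x‖ := by positivity
    nlinarith [hPx, k3, k4, k5, norm_nonneg P]
  · -- downward case : t₀(1 - μ/2) < s < t₀
    have hst : t₀ * (1 - μ/2) < s := by nlinarith [habs.1]
    obtain ⟨B, hBiff⟩ : ∃ B : Finset ℕ, ∀ i, i ∈ B ↔ t₀ ≤ |a x i| := by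
      refine ⟨A.filter (fun i => t₀ ≤ |a x i|), fun i => ?_⟩
      rw [Finset.mem_filter]
      constructor
      · exact fun h => h.2
      · intro h; exact ⟨(hA i).mpr (le_trans hcase.le h), h⟩
    have hBA : B ⊆ A := fun i hi => (hA i).mpr (le_trans hcase.le ((hBiff i).mp hi))
    obtain ⟨band, hbanddef⟩ : ∃ band : Finset ℕ, band = A \ B := ⟨_, rfl⟩
    have hbandA : band ⊆ A := by rw [hbanddef]; exact Finset.sdiff_subset
    have hband2 : ∀ i ∈ band, |a x i| < t₀ := by
      intro i hi
      rw [hbanddef, Finset.mem_sdiff] at hi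
      by_contra hcon
      push_neg at hcon
      exact hi.2 ((hBiff i).mpr hcon)
    have hband1 : ∀ i ∈ band, s ≤ |a x i| := fun i hi => (hA i).mp (hbandA hi)
    obtain ⟨v, hvdef⟩ : ∃ v : X, v = (1:ℝ) • x + ∑ j ∈ band, (μ * a x j) • e j := ⟨_, rfl⟩
    have hav : ∀ i, a v i = a x i + (if i ∈ band then μ * a x i else 0) := by
      intro i
      rw [hvdef, hcc 1 x band (fun j => μ * a x j) i, one_mul]
    have havband : ∀ i ∈ band, a v i = (1 + μ) * a x i := by
      intro i hi; rw [hav i, if_pos hi]; ring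
    have havout : ∀ i, i ∉ band → a v i = a x i := by
      intro i hi; rw [hav i, if_neg hi, add_zero]
    have hvadm : ∀ i, |a v i| ≤ 1 := by
      intro i; by_cases hi : i ∈ band
      · rw [havband i hi, abs_mul, abs_of_pos (by linarith : (0:ℝ) < 1 + μ)]
        have k1 : (1 + μ) * |a x i| ≤ (1 + μ) * t₀ :=
          mul_le_mul_of_nonneg_left (hband2 i hi).le (by linarith)
        have k2 : (1 + μ) * t₀ ≤ (3/2) * t₀ :=
          mul_le_mul_of_nonneg_right (by linarith) h0.le
        linarith
      · rw [havout i hi]; exact hx i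
    have hAiffv : ∀ i, i ∈ A ↔ t₀ ≤ |a v i| := by
      intro i; constructor
      · intro hi
        by_cases hib : i ∈ band
        · rw [havband i hib, abs_mul, abs_of_pos (by linarith : (0:ℝ) < 1 + μ)]
          have h6 := hband1 i hib
          have k1 : (1 + μ) * s ≤ (1 + μ) * |a x i| :=
            mul_le_mul_of_nonneg_left h6 (by linarith)
          have k2 : (1 + μ) * (t₀ * (1 - μ/2)) ≤ (1 + μ) * s :=
            mul_le_mul_of_nonneg_left hst.le (by linarith)
          have k3 : (0:ℝ) ≤ t₀ * μ * (1 - μ) :=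
            mul_nonneg (mul_nonneg h0.le hμ0.le) (by linarith)
          nlinarith [k1, k2, k3]
        · have hiB : i ∈ B := by
            by_contra hniB
            exact hib (by rw [hbanddef, Finset.mem_sdiff]; exact ⟨hi, hniB⟩)
          rw [havout i hib]
          exact (hBiff i).mp hiB
      · intro hle; by_contra hni
        have hnib : i ∉ band := fun h => hni (hbandA h)
        rw [havout i hnib] at hle
        have h3 : ¬ s ≤ |a x i| := fun hcon => hni ((hA i).mpr hcon)
        push_neg at h3
        linarith
    have hq := hthr v hvadm A hAiffv
    obtain ⟨G, hGdef⟩ : ∃ G : X, G = ∑ i ∈ B, a x i • e i := ⟨_, rfl⟩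
    obtain ⟨p, hpdef⟩ : ∃ p : X, p = ∑ i ∈ band, a x i • e i := ⟨_, rfl⟩
    have hG : ‖G‖ ≤ c₀ * ‖x‖ := by rw [hGdef]; exact hthr x hx B hBiff
    have hsplitv : ∑ i ∈ A, a v i • e i = (1 + μ) • p + G := by
      rw [← Finset.sum_sdiff hBA, ← hbanddef]
      congr 1
      · rw [hpdef, Finset.smul_sum]
        apply Finset.sum_congr rfl
        intro i hi
        rw [havband i hi, mul_smul]
      · rw [hGdef]
        apply Finset.sum_congr rfl
        intro i hi
        have hnib : i ∉ band := by
          rw [hbanddef, Finset.mem_sdiff]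
          exact fun h => h.2 hi
        rw [havout i hnib]
    rw [hsplitv] at hq
    have hvn : ‖v‖ ≤ ‖x‖ + μ * ‖p‖ := by
      rw [hvdef, one_smul]
      have hsum : ∑ j ∈ band, (μ * a x j) • e j = μ • p := by
        rw [hpdef, Finset.smul_sum]
        exact Finset.sum_congr rfl (fun i _ => (mul_smul μ (a x i) (e i)))
      rw [hsum]
      calc ‖x + μ • p‖ ≤ ‖x‖ + ‖μ • p‖ := norm_add_le _ _
        _ = ‖x‖ + μ * ‖p‖ := by
            rw [norm_smul, Real.norm_eq_abs, abs_of_pos hμ0]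
    have hple : (1 + μ) * ‖p‖ ≤ ‖(1 + μ) • p + G‖ + ‖G‖ := by
      have h7 : ‖(1 + μ) • p‖ = (1 + μ) * ‖p‖ := by
        rw [norm_smul, Real.norm_eq_abs, abs_of_pos (by linarith : (0:ℝ) < 1 + μ)]
      calc (1 + μ) * ‖p‖ = ‖(1 + μ) • p‖ := h7.symm
        _ = ‖((1 + μ) • p + G) - G‖ := by rw [add_sub_cancel_right]
        _ ≤ ‖(1 + μ) • p + G‖ + ‖G‖ := norm_sub_le _ _
    have hsplitx : ∑ i ∈ A, a x i • e i = p + G := by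
      rw [← Finset.sum_sdiff hBA, ← hbanddef, ← hpdef, ← hGdef]
    rw [hsplitx]
    have hqv : ‖(1 + μ) • p + G‖ ≤ c₀ * (‖x‖ + μ * ‖p‖) :=
      hq.trans (mul_le_mul_of_nonneg_left hvn hc₀0.le)
    have k4 : c₀ * (μ * ‖p‖) = (1/2) * ‖p‖ := by
      rw [← mul_assoc, mul_comm c₀ μ, hμc]
    have k5 : (0:ℝ) ≤ μ * ‖p‖ := by positivity
    have k6 : (0:ℝ) ≤ c₀ * ‖x‖ := by positivity
    calc ‖p + G‖ ≤ ‖p‖ + ‖G‖ := norm_add_le _ _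
      _ ≤ 5 * c₀ * ‖x‖ := by nlinarith [hple, hqv, hG, k4, k5, k6, norm_nonneg p]


end AuxStmt17

set_option maxHeartbeats 1600000 in
/-- A semi-normalized Schauder basis `(e_i)` with coefficient functionals `a` is
near-unconditional iff the thresholding operators `G_δ` are bounded. -/
theorem stmt17 {X : Type*} [NormedAddCommGroup X] [NormedSpace ℝ X] [CompleteSpace X]
    (e : ℕ → X) (a : X → ℕ → ℝ)
    (hbasis : ∀ x : X, Tendsto (fun N => ∑ i ∈ Finset.range N, a x i • e i) atTop (nhds x))
    (huniq : ∀ (x : X) (c : ℕ → ℝ),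
      Tendsto (fun N => ∑ i ∈ Finset.range N, c i • e i) atTop (nhds x) → c = a x)
    (hsemi : ∃ m M : ℝ, 0 < m ∧ ∀ i, m ≤ ‖e i‖ ∧ ‖e i‖ ≤ M) :
    (∀ δ : ℝ, 0 < δ → δ ≤ 1 → ∃ C : ℝ, ∀ x : X, (∀ i, |a x i| ≤ 1) →
        ∀ A : Finset ℕ, (∀ i ∈ A, δ ≤ |a x i|) →
          ‖∑ i ∈ A, a x i • e i‖ ≤ C * ‖x‖) ↔
    (∀ δ : ℝ, 0 < δ → δ ≤ 1 → ∃ C₁ : ℝ, ∀ x : X, (∀ i, |a x i| ≤ 1) →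
        ∀ A : Finset ℕ, (∀ i, i ∈ A ↔ δ ≤ |a x i|) →
          ‖∑ i ∈ A, a x i • e i‖ ≤ C₁ * ‖x‖) := by
  obtain ⟨m, M, hm, hsm⟩ := hsemi
  have hcc := coeff_combo (e := e) (a := a) hbasis huniq
  have hbigF : ∀ (x : X) (t : ℝ), 0 < t → ∃ A : Finset ℕ, ∀ i, i ∈ A ↔ t ≤ |a x i| :=
    fun x t ht => bigFin hbasis hm (fun i => (hsm i).1) x t ht
  constructor
  · intro H δ h0 h1
    obtain ⟨C, hC⟩ := H δ h0 h1
    exact ⟨C, fun x hx A hA => hC x hx A (fun i hi => (hA i).1 hi)⟩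
  · intro H δ hδ0 hδ1
    have key0 : ∀ t : ℝ, 0 < t → t ≤ 1 → ∃ C : ℝ, 1 ≤ C ∧ Thr e a t C := by
      intro t h0 h1
      obtain ⟨C₁, hC₁⟩ := H t h0 h1
      refine ⟨max C₁ 1, le_max_right _ _, fun v hv A hA => ?_⟩
      exact (hC₁ v hv A hA).trans
        (mul_le_mul_of_nonneg_right (le_max_left _ _) (norm_nonneg v))
    have NL := fun t₀ h1 h2 => nbhd hcc key0 t₀ h1 h2
    choose! ε Mc hNL using NL
    obtain ⟨δ₀, hδ₀def⟩ : ∃ d : ℝ, d = δ/4 := ⟨_, rfl⟩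
    have hδ₀ : 0 < δ₀ := by rw [hδ₀def]; positivity
    -- compactness: finitely many anchors cover [δ₀, 2/3]
    obtain ⟨T, hTmem, hTcov⟩ := (isCompact_Icc (a := δ₀) (b := 2/3)).elim_nhds_subcover
      (fun t => Metric.ball t (ε t))
      (fun t ht => Metric.ball_mem_nhds t (hNL t (lt_of_lt_of_le hδ₀ ht.1) ht.2).1)
    obtain ⟨Cs, hCsdef⟩ : ∃ c : ℝ, c = 1 + ∑ t ∈ T, |Mc t| := ⟨_, rfl⟩
    have hCs1 : 1 ≤ Cs := by
      rw [hCsdef]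
      have : (0:ℝ) ≤ ∑ t ∈ T, |Mc t| := Finset.sum_nonneg (fun t _ => abs_nonneg _)
      linarith
    have hCs0 : 0 < Cs := lt_of_lt_of_le one_pos hCs1
    have huniform : ∀ s, δ₀ ≤ s → s ≤ 2/3 → Thr e a s Cs := by
      intro s hs1 hs2
      have hsmem : s ∈ Set.Icc δ₀ (2/3 : ℝ) := ⟨hs1, hs2⟩
      have hmem := hTcov hsmem
      rw [Set.mem_iUnion₂] at hmem
      obtain ⟨t, htT, hst⟩ := hmem
      have htIcc := hTmem t htT
      have h := hNL t (lt_of_lt_of_le hδ₀ htIcc.1) htIcc.2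
      have hthr := h.2 s (by rw [Metric.mem_ball, Real.dist_eq] at hst; exact hst)
      refine thr_mono hthr ?_
      calc Mc t ≤ |Mc t| := le_abs_self _
        _ ≤ ∑ t' ∈ T, |Mc t'| := Finset.single_le_sum (f := fun t' => |Mc t'|) (fun _ _ => abs_nonneg _) htT
        _ ≤ Cs := by rw [hCsdef]; linarith
    obtain ⟨lam, hlamdef⟩ : ∃ l : ℝ, l = 1 / (2 * (Cs + 3)) := ⟨_, rfl⟩
    have hlam0 : 0 < lam := by rw [hlamdef]; positivity
    have hlam8 : lam ≤ 1/8 := by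
      rw [hlamdef, div_le_div_iff₀ (by positivity) (by norm_num)]
      linarith
    have hlamCs : lam * Cs ≤ 1/2 := by
      rw [hlamdef, div_mul_eq_mul_div, div_le_iff₀ (by positivity)]
      nlinarith
    -- main inductive estimate
    have main : ∀ n : ℕ, ∀ t : ℝ, δ₀ ≤ t → t ≤ 2/3 → 1/2 < t * (1+lam)^n →
        ∀ y : X, (∀ i, |a y i| ≤ 1/2) → ∀ A : Finset ℕ, (∀ i ∈ A, t ≤ |a y i|) →
        ‖∑ i ∈ A, a y i • e i‖ ≤ ((3:ℝ)^n - 1) * Cs * ‖y‖ := by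
      intro n
      induction n with
      | zero =>
        intro t ht1 ht2 ht3 y hy A hA
        rw [pow_zero, mul_one] at ht3
        have hAe : A = ∅ := Finset.eq_empty_of_forall_notMem
          (fun i hi => absurd (hA i hi) (not_le.mpr (lt_of_le_of_lt (hy i) ht3)))
        rw [hAe, Finset.sum_empty, norm_zero]
        norm_num
      | succ n ih =>
        intro t ht1 ht2 ht3 y hy A hA
        have h3n : (1:ℝ) ≤ 3^n := by
          calc (1:ℝ) = 1^n := (one_pow n).symm
            _ ≤ 3^n := pow_le_pow_left₀ (by norm_num) (by norm_num) n
        have hCsy : (0:ℝ) ≤ Cs * ‖y‖ := mul_nonneg hCs0.le (norm_nonneg y)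
        by_cases hhalf : 1/2 < t
        · have hAe : A = ∅ := Finset.eq_empty_of_forall_notMem
            (fun i hi => absurd (hA i hi) (not_le.mpr (lt_of_le_of_lt (hy i) hhalf)))
          rw [hAe, Finset.sum_empty, norm_zero]
          have h31 : (1:ℝ) ≤ 3^(n+1) := by
            calc (1:ℝ) = 1^(n+1) := (one_pow _).symm
              _ ≤ 3^(n+1) := pow_le_pow_left₀ (by norm_num) (by norm_num) _
          nlinarith
        · push_neg at hhalf
          obtain ⟨t', ht'def⟩ : ∃ s : ℝ, s = t * (1 + lam) := ⟨_, rfl⟩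
          have htpos : 0 < t := lt_of_lt_of_le hδ₀ ht1
          have ht'1 : δ₀ ≤ t' := by
            rw [ht'def]; nlinarith
          have ht'2 : t' ≤ 2/3 := by
            rw [ht'def]; nlinarith
          have ht'pos : 0 < t' := lt_of_lt_of_le hδ₀ ht'1
          have ht'3 : 1/2 < t' * (1+lam)^n := by
            rw [ht'def]
            have hps : t * (1+lam)^(n+1) = t * (1 + lam) * (1+lam)^n := by
              rw [pow_succ]; ring
            rw [← hps]; exact ht3
          obtain ⟨P, hPdef⟩ : ∃ P : X, P = ∑ i ∈ A, a y i • e i := ⟨_, rfl⟩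
          obtain ⟨v, hvdef⟩ : ∃ v : X, v = (1:ℝ) • y + ∑ j ∈ A, (lam * a y j) • e j := ⟨_, rfl⟩
          have hav : ∀ i, a v i = a y i + (if i ∈ A then lam * a y i else 0) := by
            intro i
            rw [hvdef, hcc 1 y A (fun j => lam * a y j) i, one_mul]
          have havA : ∀ i ∈ A, a v i = (1+lam) * a y i := by
            intro i hi; rw [hav i, if_pos hi]; ring
          have havN : ∀ i, i ∉ A → a v i = a y i := by
            intro i hi; rw [hav i, if_neg hi, add_zero]
          have hvadm : ∀ i, |a v i| ≤ 1 := by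
            intro i; by_cases hi : i ∈ A
            · rw [havA i hi, abs_mul, abs_of_pos (by linarith : (0:ℝ) < 1 + lam)]
              have k1 : (1+lam) * |a y i| ≤ (1+lam) * (1/2) :=
                mul_le_mul_of_nonneg_left (hy i) (by linarith)
              linarith
            · rw [havN i hi]; linarith [hy i]
          obtain ⟨E, hE⟩ := hbigF v t' ht'pos
          have hAE : A ⊆ E := by
            intro i hi
            rw [hE i, havA i hi, abs_mul, abs_of_pos (by linarith : (0:ℝ) < 1 + lam)]
            have k1 : (1+lam) * t ≤ (1+lam) * |a y i| :=
              mul_le_mul_of_nonneg_left (hA i hi) (by linarith)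
            rw [ht'def]; linarith [k1]
          have hJy : ∀ i ∈ E \ A, t' ≤ |a y i| := by
            intro i hi
            rw [Finset.mem_sdiff] at hi
            have h1 := (hE i).mp hi.1
            rw [havN i hi.2] at h1; exact h1
          have hQbound := ih t' ht'1 ht'2 ht'3 y hy (E \ A) hJy
          obtain ⟨Q, hQdef⟩ : ∃ q : X, q = ∑ i ∈ E \ A, a y i • e i := ⟨_, rfl⟩
          rw [← hQdef] at hQbound
          have hTh := huniform t' ht'1 ht'2 v hvadm E hE
          have hEsplit : ∑ i ∈ E, a v i • e i = (1+lam) • P + Q := by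
            rw [← Finset.union_sdiff_of_subset hAE,
              Finset.sum_union Finset.disjoint_sdiff]
            congr 1
            · rw [hPdef, Finset.smul_sum]
              apply Finset.sum_congr rfl
              intro i hi
              rw [havA i hi, mul_smul]
            · rw [hQdef]
              apply Finset.sum_congr rfl
              intro i hi
              rw [havN i (Finset.mem_sdiff.mp hi).2]
          rw [hEsplit] at hTh
          have hvnorm : ‖v‖ ≤ ‖y‖ + lam * ‖P‖ := by
            rw [hvdef, one_smul]
            have hsum : ∑ j ∈ A, (lam * a y j) • e j = lam • P := by
              rw [hPdef, Finset.smul_sum]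
              exact Finset.sum_congr rfl (fun i _ => (mul_smul lam (a y i) (e i)))
            rw [hsum]
            calc ‖y + lam • P‖ ≤ ‖y‖ + ‖lam • P‖ := norm_add_le _ _
              _ = ‖y‖ + lam * ‖P‖ := by
                  rw [norm_smul, Real.norm_eq_abs, abs_of_pos hlam0]
          have hPle : (1+lam) * ‖P‖ ≤ ‖(1+lam) • P + Q‖ + ‖Q‖ := by
            have h7 : ‖(1+lam) • P‖ = (1+lam) * ‖P‖ := by
              rw [norm_smul, Real.norm_eq_abs, abs_of_pos (by linarith : (0:ℝ) < 1 + lam)]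
            calc (1+lam) * ‖P‖ = ‖(1+lam) • P‖ := h7.symm
              _ = ‖((1+lam) • P + Q) - Q‖ := by rw [add_sub_cancel_right]
              _ ≤ ‖(1+lam) • P + Q‖ + ‖Q‖ := norm_sub_le _ _
          have e1 : ‖(1+lam) • P + Q‖ ≤ Cs * (‖y‖ + lam * ‖P‖) :=
            hTh.trans (mul_le_mul_of_nonneg_left hvnorm hCs0.le)
          have k3 : Cs * (lam * ‖P‖) ≤ (1/2) * ‖P‖ := by
            have h8 : (lam * Cs) * ‖P‖ ≤ (1/2) * ‖P‖ :=
              mul_le_mul_of_nonneg_right hlamCs (norm_nonneg P)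
            linarith [h8]
          have hps : (3:ℝ)^(n+1) = 3 * 3^n := by rw [pow_succ]; ring
          rw [← hPdef]
          -- (1+lam)‖P‖ ≤ Cs‖y‖ + (1/2)‖P‖ + (3^n - 1)Cs‖y‖, so ‖P‖ ≤ 2·3^n·Cs‖y‖
          nlinarith [hPle, e1, k3, hQbound, norm_nonneg P, hCsy, hlam0.le, h3n,
            mul_nonneg hlam0.le (norm_nonneg P)]
    -- conclusion
    obtain ⟨n₀, hn₀⟩ := pow_unbounded_of_one_lt (R := ℝ) (1/δ) (by linarith : (1:ℝ) < 1 + lam)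
    refine ⟨((3:ℝ)^n₀ - 1) * Cs, ?_⟩
    intro x hx A hA
    obtain ⟨y, hydef⟩ : ∃ y : X, y = (2⁻¹ : ℝ) • x := ⟨_, rfl⟩
    have hay : ∀ i, a y i = 2⁻¹ * a x i := by
      intro i
      have h9 := hcc 2⁻¹ x (∅ : Finset ℕ) (fun _ => (0:ℝ)) i
      simpa [hydef] using h9
    have hy : ∀ i, |a y i| ≤ 1/2 := by
      intro i
      rw [hay i, abs_mul]
      have : |(2⁻¹ : ℝ)| = 1/2 := by norm_num
      rw [this]
      linarith [hx i, abs_nonneg (a x i)]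
    have hA' : ∀ i ∈ A, δ/2 ≤ |a y i| := by
      intro i hi
      rw [hay i, abs_mul]
      have h10 : |(2⁻¹ : ℝ)| = 1/2 := by norm_num
      rw [h10]
      linarith [hA i hi]
    have hδn : 1/2 < (δ/2) * (1+lam)^n₀ := by
      have h11 : (1/δ) * δ < (1+lam)^n₀ * δ := by
        exact mul_lt_mul_of_pos_right hn₀ hδ0
      rw [one_div, inv_mul_cancel₀ (ne_of_gt hδ0)] at h11
      nlinarith
    have hmain := main n₀ (δ/2) (by rw [hδ₀def]; linarith) (by linarith) hδn y hy A hA'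
    have hsum : ∑ i ∈ A, a y i • e i = (2⁻¹ : ℝ) • ∑ i ∈ A, a x i • e i := by
      rw [Finset.smul_sum]
      apply Finset.sum_congr rfl
      intro i _
      rw [hay i, mul_smul]
    have hny : ‖y‖ = 2⁻¹ * ‖x‖ := by
      rw [hydef, norm_smul, Real.norm_eq_abs]
      norm_num
    rw [hsum, norm_smul, Real.norm_eq_abs, hny] at hmain
    have h12 : |(2⁻¹:ℝ)| = 2⁻¹ := by norm_num
    rw [h12] at hmain
    linarith [hmain]
end
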